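/- arXiv:1706.03003 — 3 statements merged into one kernel-verified Lean document; each statement's English description precedes it below -/
import Mathlib

section
/- (Non-archimedean stationary phase.) Let X ⊂ K^n and V ⊂ K^r be open sets, let p : X × V → K be strict C¹, and let φ ∈ S(X) with support Supp(φ). Assume there is δ > 0 such that |grad_x p(x,η)| ≥ δ for all (x,η) ∈ Supp(φ) × V, and that |R(x,y,η)| is bounded for x and x+y in Supp(φ) and η ∈ V, where R is defined by p(x+y,η) = p(x,η) + (grad_x p(x,η)|y) + (R(x,y,η)y|y). Then there is an integer r₀ such that for every η ∈ V, the function λ ↦ I_η(p,φ)(λ) := ∫_X φ(x)ψ_K(λ p(x,η)) dx on K^× vanishes for all λ outside the ball B_{r₀}, i.e. its support is contained in B_{r₀}, with r₀ independent of η ∈ V. -/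
open MeasureTheory Filter Topology
open scoped BigOperators Classical

noncomputable section

/-- Axiomatization of a non-archimedean local field: a topological field equipped with a
surjective discrete valuation `ord : K → ℤ ∪ {∞}` whose closed balls are compact open and
form a neighborhood basis at every point. -/
class NALocalField (K : Type) [Field K] [TopologicalSpace K] where
  ord : K → WithTop ℤ
  ord_eq_top_iff : ∀ x : K, ord x = ⊤ ↔ x = 0
  ord_mul : ∀ x y : K, ord (x * y) = ord x + ord y
  ord_add : ∀ x y : K, min (ord x) (ord y) ≤ ord (x + y)
  ord_surjective : ∀ m : ℤ, ∃ x : K, ord x = (m : WithTop ℤ)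
  isOpen_ball : ∀ m : ℤ, IsOpen {x : K | (m : WithTop ℤ) ≤ ord x}
  isCompact_ball : ∀ m : ℤ, IsCompact {x : K | (m : WithTop ℤ) ≤ ord x}
  nhds_basis : ∀ x : K, (nhds x).HasBasis (fun _ : ℤ => True)
      (fun m => {y : K | (m : WithTop ℤ) ≤ ord (y - x)})

variable {K : Type} [Field K] [TopologicalSpace K] [IsTopologicalRing K] [NALocalField K]

/-- The minimum of the valuations of the coordinates of a vector; `|v| = q^{-ordVec v}`. -/
def ordVec {ι : Type} [Fintype ι] (v : ι → K) : WithTop ℤ :=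
  Finset.univ.inf fun i => NALocalField.ord (v i)

/-- The ball of valuative radius `r` around `x` in `K^ι`. -/
def pball {ι : Type} [Fintype ι] (x : ι → K) (r : ℤ) : Set (ι → K) :=
  {y | (r : WithTop ℤ) ≤ ordVec (x - y)}

section SB
variable {α : Type} [TopologicalSpace α]

/-- Schwartz–Bruhat functions on a subset `X ⊆ α`: locally constant compactly supported
`ℂ`-valued functions on `X` (as functions on the subtype). -/
def IsSB (X : Set α) (f : X → ℂ) : Prop :=
  IsLocallyConstant f ∧ HasCompactSupport f

/-- A distribution on `X`: a functional which is `ℂ`-linear on Schwartz–Bruhat functions. -/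
def IsDistribution (X : Set α) (u : (X → ℂ) → ℂ) : Prop :=
  (∀ (c : ℂ) (f : X → ℂ), IsSB X f → u (c • f) = c * u f) ∧
  (∀ f g : X → ℂ, IsSB X f → IsSB X g → u (f + g) = u f + u g)

/-- Schwartz–Bruhat functions on an open subset `U ⊆ α`, realized as locally constant
compactly supported functions on `α` whose support is contained in `U`. -/
def IsSBOn (U : Set α) (f : α → ℂ) : Prop :=
  IsLocallyConstant f ∧ HasCompactSupport f ∧ tsupport f ⊆ U

/-- A distribution on an open set `U ⊆ α`, in the ambient-function realization. -/
def IsDistributionOn (U : Set α) (u : (α → ℂ) → ℂ) : Prop :=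
  (∀ (c : ℂ) (f : α → ℂ), IsSBOn U f → u (c • f) = c * u f) ∧
  (∀ f g : α → ℂ, IsSBOn U f → IsSBOn U g → u (f + g) = u f + u g)

end SB

/-- `ψ` is an additive character of `K` which is trivial on the maximal ideal and
nontrivial on the ring of integers. -/
def IsStandardChar (ψ : AddChar K ℂ) : Prop :=
  (∀ x : K, (1 : WithTop ℤ) ≤ NALocalField.ord x → ψ x = 1) ∧
  (∃ x : K, (0 : WithTop ℤ) ≤ NALocalField.ord x ∧ ψ x ≠ 1)

section Meas
variable [MeasurableSpace K] [BorelSpace K]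

/-- `μ` is a (normalized) Haar measure on `(K, +)`: it is translation invariant and gives
the valuation ring `O_K` measure `1`. -/
def IsHaar (μ : Measure K) : Prop :=
  (∀ (a : K) (s : Set K), μ ((fun x => a + x) ⁻¹' s) = μ s) ∧
  μ {x : K | (0 : WithTop ℤ) ≤ NALocalField.ord x} = 1

/-- The product (Haar) measure on `K^ι`, giving `O_K^ι` measure `1`. -/
def piHaar (μ : Measure K) (ι : Type) [Fintype ι] : Measure (ι → K) :=
  Measure.pi fun _ => μ

end Meas

/-- `p : X × V → K` is strict `C¹`: at each point of `X × V` it admits a (total)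
derivative, in the valuative strict sense. -/
def StrictC1Pair {n r : ℕ} (p : (Fin n → K) → (Fin r → K) → K)
    (X : Set (Fin n → K)) (V : Set (Fin r → K)) : Prop :=
  ∀ q ∈ X ×ˢ V, ∃ (a : Fin n → K) (b : Fin r → K), ∀ cc : ℤ,
    ∀ᶠ w : ((Fin n → K) × (Fin r → K)) × ((Fin n → K) × (Fin r → K)) in
        nhdsWithin (q, q) ((X ×ˢ V) ×ˢ (X ×ˢ V)),
      (cc : WithTop ℤ) + min (ordVec (w.1.1 - w.2.1)) (ordVec (w.1.2 - w.2.2)) ≤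
        NALocalField.ord (p w.1.1 w.1.2 - p w.2.1 w.2.2 -
          (∑ i, a i * (w.1.1 i - w.2.1 i)) - ∑ j, b j * (w.1.2 j - w.2.2 j))

namespace SPAux

open NALocalField

variable {K : Type} [Field K] [TopologicalSpace K] [IsTopologicalRing K] [NALocalField K]

lemma ord_zero : ord (0:K) = ⊤ := (ord_eq_top_iff (K := K) 0).mpr rfl

lemma ord_ne_top {x : K} (hx : x ≠ 0) : ord x ≠ ⊤ := fun h => hx ((ord_eq_top_iff x).mp h)

lemma ord_one : ord (1:K) = (0 : WithTop ℤ) := by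
  have h := ord_mul (1:K) 1
  rw [one_mul] at h
  have hne : ord (1:K) ≠ ⊤ := ord_ne_top one_ne_zero
  lift ord (1:K) to ℤ using hne with a ha
  rw [← WithTop.coe_add] at h
  have : a = a + a := WithTop.coe_injective h
  have : a = 0 := by omega
  exact_mod_cast congrArg (fun z : ℤ => (z : WithTop ℤ)) this

lemma ord_neg (x : K) : ord (-x) = ord x := by
  have hm : ord ((-1 : K) * x) = ord (-1 : K) + ord x := ord_mul _ _
  have h1 : ord (-1 : K) = 0 := by
    have h := ord_mul (-1 : K) (-1)
    rw [neg_mul_neg, one_mul, ord_one] at h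
    have hne : ord (-1:K) ≠ ⊤ := ord_ne_top (by norm_num)
    lift ord (-1:K) to ℤ using hne with a ha
    rw [← WithTop.coe_add] at h
    have : a + a = 0 := WithTop.coe_injective h.symm
    have : a = 0 := by omega
    exact_mod_cast congrArg (fun z : ℤ => (z : WithTop ℤ)) this
  rw [neg_one_mul] at hm
  rw [hm, h1, zero_add]

lemma ord_sum {ι : Type*} (s : Finset ι) (f : ι → K) :
    (s.inf fun i => ord (f i)) ≤ ord (∑ i ∈ s, f i) := by
  induction s using Finset.cons_induction with
  | empty => simp [ord_zero]
  | cons a s ha ih =>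
      rw [Finset.sum_cons, Finset.inf_cons]
      exact le_trans (min_le_min (le_refl _) ih) (ord_add _ _)

lemma le_ordVec_iff {ι : Type} [Fintype ι] {v : ι → K} {m : WithTop ℤ} :
    m ≤ ordVec v ↔ ∀ i, m ≤ ord (v i) := by
  simp [ordVec, Finset.le_inf_iff]

lemma ordVec_le {ι : Type} [Fintype ι] (v : ι → K) (i : ι) : ordVec v ≤ ord (v i) :=
  Finset.inf_le (Finset.mem_univ i)

lemma ordVec_zero {ι : Type} [Fintype ι] : ordVec (0 : ι → K) = ⊤ := by
  simp [ordVec, ord_zero]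

lemma ordVec_neg {ι : Type} [Fintype ι] (v : ι → K) : ordVec (-v) = ordVec v := by
  unfold ordVec
  exact Finset.inf_congr rfl fun i _ => by simp [ord_neg]

lemma min_le_ordVec_add {ι : Type} [Fintype ι] (v w : ι → K) :
    min (ordVec v) (ordVec w) ≤ ordVec (v + w) := by
  rw [le_ordVec_iff]
  intro i
  exact le_trans (min_le_min (ordVec_le v i) (ordVec_le w i)) (ord_add _ _)

lemma ord_sum_mul {ι : Type} [Fintype ι] (a w : ι → K) :
    ordVec a + ordVec w ≤ ord (∑ i, a i * w i) := by
  refine le_trans (Finset.le_inf fun i _ => ?_) (ord_sum _ _)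
  rw [ord_mul]
  exact add_le_add (ordVec_le a i) (ordVec_le w i)

/-- closed unit-type balls in `K` -/
def KB (K : Type) [Field K] [TopologicalSpace K] [NALocalField K] (m : ℤ) : Set K :=
  {x : K | (m : WithTop ℤ) ≤ ord x}

lemma isOpen_KB (m : ℤ) : IsOpen (KB K m) := isOpen_ball m

lemma isOpen_ball_around (c : K) (m : ℤ) :
    IsOpen {y : K | (m : WithTop ℤ) ≤ ord (y - c)} := by
  have : {y : K | (m : WithTop ℤ) ≤ ord (y - c)} = (fun y => y - c) ⁻¹' KB K m := rfl
  rw [this]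
  exact (isOpen_KB m).preimage (continuous_id.sub continuous_const)

lemma exists_ord_lb (x : K) : ∃ m : ℤ, (m : WithTop ℤ) ≤ ord x := by
  cases h : ord x with
  | top => exact ⟨0, by simp [h]⟩
  | coe a => exact ⟨a, by simp [h]⟩

theorem secondCountable : SecondCountableTopology K := by
  have hex : ∀ m k : ℤ, ∃ t : Finset K,
      KB K m ⊆ ⋃ c ∈ t, {y : K | (k : WithTop ℤ) ≤ ord (y - c)} := by
    intro m k
    refine (isCompact_ball m).elim_finite_subcover
      (fun c : K => {y : K | (k : WithTop ℤ) ≤ ord (y - c)})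
      (fun c => isOpen_ball_around c k) ?_
    intro x _
    exact Set.mem_iUnion.2 ⟨x, by simp [sub_self, ord_zero]⟩
  choose t ht using hex
  set S : Set (Set K) :=
    ⋃ mk : ℤ × ℤ, (fun c => {y : K | ((mk.2 : ℤ) : WithTop ℤ) ≤ ord (y - c)}) '' (t mk.1 mk.2 : Set K)
    with hS
  have hcount : S.Countable :=
    Set.countable_iUnion fun mk => ((t mk.1 mk.2).countable_toSet).image _
  have hbasis : TopologicalSpace.IsTopologicalBasis S := by
    refine TopologicalSpace.isTopologicalBasis_of_isOpen_of_nhds ?_ ?_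
    · intro u hu
      rw [hS] at hu
      obtain ⟨mk, hmk⟩ := Set.mem_iUnion.1 hu
      obtain ⟨c, -, rfl⟩ := hmk
      exact isOpen_ball_around c mk.2
    · intro a u ha hu
      obtain ⟨k, -, hk⟩ := (nhds_basis a).mem_iff.1 (hu.mem_nhds ha)
      obtain ⟨m, hm⟩ := exists_ord_lb a
      have hacov := ht m k hm
      obtain ⟨c, hc⟩ := Set.mem_iUnion.1 hacov
      obtain ⟨hct, hac⟩ := Set.mem_iUnion.1 hc
      refine ⟨{y : K | (k : WithTop ℤ) ≤ ord (y - c)}, ?_, hac, ?_⟩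
      · rw [hS]
        exact Set.mem_iUnion.2 ⟨(m, k), Set.mem_image_of_mem _ hct⟩
      · intro y hy
        apply hk
        have h1 : (k : WithTop ℤ) ≤ ord (y - c) := hy
        have h2 : (k : WithTop ℤ) ≤ ord (c - a) := by
          rw [show c - a = -(a - c) by ring, ord_neg]
          exact hac
        have : y - a = (y - c) + (c - a) := by ring
        have h3 := ord_add (y - c) (c - a)
        rw [← this] at h3
        exact le_trans (le_min h1 h2) h3
  exact hbasis.secondCountableTopology hcount

end SPAux
namespace SPAux

open NALocalField

set_option linter.unusedSectionVars false

variable {K : Type} [Field K] [TopologicalSpace K] [IsTopologicalRing K] [NALocalField K]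

section Vec
variable {ι : Type} [Fintype ι]

lemma VB_eq_pi (c : ℤ) :
    {x : ι → K | (c : WithTop ℤ) ≤ ordVec x} = Set.pi Set.univ (fun _ => KB K c) := by
  ext x
  simp [Set.mem_pi, KB, le_ordVec_iff]

lemma isOpen_VB (c : ℤ) : IsOpen {x : ι → K | (c : WithTop ℤ) ≤ ordVec x} := by
  rw [VB_eq_pi]
  exact isOpen_set_pi Set.finite_univ fun i _ => isOpen_KB c

lemma isCompact_VB (c : ℤ) : IsCompact {x : ι → K | (c : WithTop ℤ) ≤ ordVec x} := by
  rw [VB_eq_pi]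
  exact isCompact_univ_pi fun i => isCompact_ball c

lemma isOpen_vball (x : ι → K) (m : ℤ) :
    IsOpen {y : ι → K | (m : WithTop ℤ) ≤ ordVec (y - x)} := by
  have : {y : ι → K | (m : WithTop ℤ) ≤ ordVec (y - x)}
      = (fun y : ι → K => y - x) ⁻¹' {v : ι → K | (m : WithTop ℤ) ≤ ordVec v} := rfl
  rw [this]
  exact (isOpen_VB m).preimage (continuous_id.sub continuous_const)

lemma vball_mem_nhds (x : ι → K) (m : ℤ) :
    {y : ι → K | (m : WithTop ℤ) ≤ ordVec (y - x)} ∈ nhds x :=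
  (isOpen_vball x m).mem_nhds (by simp [sub_self, ordVec_zero])

lemma vec_nhds_basis (x : ι → K) :
    (nhds x).HasBasis (fun _ : ℤ => True)
      (fun m => {y : ι → K | (m : WithTop ℤ) ≤ ordVec (y - x)}) := by
  constructor
  intro u
  constructor
  · intro hu
    obtain ⟨v, hvu, hv, hxv⟩ := mem_nhds_iff.1 hu
    obtain ⟨I, w, hw, hsub⟩ := isOpen_pi_iff.1 hv x hxv
    have : ∀ i : ι, ∃ m : ℤ, i ∈ I → {y : K | (m : WithTop ℤ) ≤ ord (y - x i)} ⊆ w i := by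
      intro i
      by_cases hi : i ∈ I
      · obtain ⟨m, -, hm⟩ := (nhds_basis (x i)).mem_iff.1 ((hw i hi).1.mem_nhds (hw i hi).2)
        exact ⟨m, fun _ => hm⟩
      · exact ⟨0, fun h => absurd h hi⟩
    choose mm hmm using this
    obtain ⟨M, hM⟩ := Finset.exists_le (I.image mm)
    refine ⟨M, trivial, ?_⟩
    intro y hy
    apply hvu
    apply hsub
    intro i hi
    apply hmm i hi
    have h1 : (M : WithTop ℤ) ≤ ord (y i - x i) :=
      le_trans hy (ordVec_le (y - x) i)
    have h2 : ((mm i : ℤ) : WithTop ℤ) ≤ (M : WithTop ℤ) := by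
      exact_mod_cast hM _ (Finset.mem_image_of_mem _ hi)
    exact le_trans h2 h1
  · rintro ⟨m, -, hm⟩
    exact Filter.mem_of_superset (vball_mem_nhds x m) hm

lemma exists_ordVec_lb (x : ι → K) : ∃ m : ℤ, (m : WithTop ℤ) ≤ ordVec x := by
  cases h : ordVec x with
  | top => exact ⟨0, by simp [h]⟩
  | coe a => exact ⟨a, by simp [h]⟩

lemma compact_subset_vball {s : Set (ι → K)} (hs : IsCompact s) :
    ∃ M : ℤ, ∀ x ∈ s, (M : WithTop ℤ) ≤ ordVec x := by
  obtain ⟨t, ht⟩ := hs.elim_finite_subcover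
    (fun m : ℤ => {x : ι → K | (m : WithTop ℤ) ≤ ordVec x})
    (fun m => isOpen_VB m)
    (fun x _ => Set.mem_iUnion.2 (exists_ordVec_lb x))
  obtain ⟨M, hM⟩ := Finset.exists_le (α := ℤ) (t.image fun m => -m)
  refine ⟨-M, fun x hx => ?_⟩
  obtain ⟨m, hm⟩ := Set.mem_iUnion.1 (ht hx)
  obtain ⟨hmt, hxm⟩ := Set.mem_iUnion.1 hm
  have : (-M : ℤ) ≤ m := by
    have := hM (-m) (Finset.mem_image_of_mem _ hmt)
    omega
  exact le_trans (by exact_mod_cast this) hxm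

/-- uniform local constancy of a compactly supported locally constant function -/
lemma unif_const {φ : (ι → K) → ℂ} (h1 : IsLocallyConstant φ) (h2 : HasCompactSupport φ) :
    ∃ m₀ : ℤ, ∀ x u : ι → K, (m₀ : WithTop ℤ) ≤ ordVec u → φ (x + u) = φ x := by
  have hrad : ∀ x : ι → K, ∃ m : ℤ,
      {y : ι → K | (m : WithTop ℤ) ≤ ordVec (y - x)} ⊆ φ ⁻¹' {φ x} := by
    intro x
    have : φ ⁻¹' {φ x} ∈ nhds x := (h1 {φ x}).mem_nhds rfl
    obtain ⟨m, -, hm⟩ := (vec_nhds_basis x).mem_iff.1 this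
    exact ⟨m, hm⟩
  choose rad hrad using hrad
  obtain ⟨t, ht⟩ := h2.elim_finite_subcover
    (fun c : ι → K => {y : ι → K | ((rad c : ℤ) : WithTop ℤ) ≤ ordVec (y - c)})
    (fun c => isOpen_vball c (rad c))
    (fun x _ => Set.mem_iUnion.2 ⟨x, by simp [sub_self, ordVec_zero]⟩)
  obtain ⟨m₀, hm₀⟩ := Finset.exists_le (t.image rad)
  refine ⟨m₀, fun x u hu => ?_⟩
  have key : ∀ u : ι → K, (m₀ : WithTop ℤ) ≤ ordVec u → ∀ c ∈ t, ∀ z : ι → K,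
      ((rad c : ℤ) : WithTop ℤ) ≤ ordVec (z - c) →
      ((rad c : ℤ) : WithTop ℤ) ≤ ordVec (z + u - c) := by
    intro u hu c hc z hz
    have hradm : ((rad c : ℤ) : WithTop ℤ) ≤ (m₀ : WithTop ℤ) := by
      exact_mod_cast hm₀ _ (Finset.mem_image_of_mem _ hc)
    have : z + u - c = (z - c) + u := by ring
    rw [this]
    exact le_trans (le_min hz (le_trans hradm hu)) (min_le_ordVec_add _ _)
  have memiff : ∀ u : ι → K, (m₀ : WithTop ℤ) ≤ ordVec u →
      ∀ z : ι → K, z ∈ tsupport φ → φ (z + u) = φ z := by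
    intro u hu z hz
    obtain ⟨c, hc⟩ := Set.mem_iUnion.1 (ht hz)
    obtain ⟨hct, hzc⟩ := Set.mem_iUnion.1 hc
    have h1 : φ z = φ c := hrad c hzc
    have h2 : φ (z + u) = φ c := hrad c (key u hu c hct z hzc)
    rw [h1, h2]
  by_cases hx : x ∈ tsupport φ
  · exact memiff u hu x hx
  · by_cases hxu : x + u ∈ tsupport φ
    · have hneg : (m₀ : WithTop ℤ) ≤ ordVec (-u) := by rwa [ordVec_neg]
      have h := memiff (-u) hneg (x + u) hxu
      rw [show x + u + -u = x by ring] at h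
      rw [h]
    · rw [image_eq_zero_of_notMem_tsupport hx, image_eq_zero_of_notMem_tsupport hxu]

end Vec
end SPAux
namespace SPAux

open NALocalField MeasureTheory

set_option linter.unusedSectionVars false

variable {K : Type} [Field K] [TopologicalSpace K] [IsTopologicalRing K] [NALocalField K]
variable [MeasurableSpace K] [BorelSpace K]

lemma haar_translate (μ : Measure K) (hμ : IsHaar μ) (c : K) (m : ℤ) :
    μ {y : K | (m : WithTop ℤ) ≤ ord (y - c)} = μ (KB K m) := by
  have h := hμ.1 c {y : K | (m : WithTop ℤ) ≤ ord (y - c)}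
  have hpre : (fun x => c + x) ⁻¹' {y : K | (m : WithTop ℤ) ≤ ord (y - c)} = KB K m := by
    ext x
    simp [KB, add_sub_cancel_left]
  rw [hpre] at h
  exact h.symm

lemma haar_ball_lt_top (μ : Measure K) (hμ : IsHaar μ) (m : ℤ) : μ (KB K m) < ⊤ := by
  obtain ⟨t, ht⟩ := (isCompact_ball (K := K) m).elim_finite_subcover
    (fun c : K => {y : K | (0 : WithTop ℤ) ≤ ord (y - c)})
    (fun c => isOpen_ball_around c 0)
    (fun x _ => Set.mem_iUnion.2 ⟨x, by simp [sub_self, ord_zero]⟩)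
  calc μ (KB K m) ≤ ∑ c ∈ t, μ {y : K | (0 : WithTop ℤ) ≤ ord (y - c)} :=
        le_trans (measure_mono ht) (measure_biUnion_finset_le t _)
    _ = ∑ c ∈ t, 1 := by
        refine Finset.sum_congr rfl fun c _ => ?_
        have he : {y : K | (0 : WithTop ℤ) ≤ ord (y - c)}
            = {y : K | (((0:ℤ)) : WithTop ℤ) ≤ ord (y - c)} := by norm_num
        rw [he, haar_translate μ hμ c 0]
        exact hμ.2
    _ < ⊤ := by simp

lemma haar_ball_ne_zero (μ : Measure K) (hμ : IsHaar μ) (m : ℤ) : μ (KB K m) ≠ 0 := by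
  obtain ⟨t, ht⟩ := (isCompact_ball (K := K) 0).elim_finite_subcover
    (fun c : K => {y : K | (m : WithTop ℤ) ≤ ord (y - c)})
    (fun c => isOpen_ball_around c m)
    (fun x _ => Set.mem_iUnion.2 ⟨x, by simp [sub_self, ord_zero]⟩)
  intro h0
  have h1 : (1 : ENNReal) ≤ ∑ c ∈ t, μ {y : K | (m : WithTop ℤ) ≤ ord (y - c)} := by
    rw [← hμ.2]
    exact le_trans (measure_mono ht) (measure_biUnion_finset_le t _)
  have h2 : ∑ c ∈ t, μ {y : K | (m : WithTop ℤ) ≤ ord (y - c)} = 0 := by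
    refine Finset.sum_eq_zero fun c _ => ?_
    rw [haar_translate μ hμ c m]
    exact h0
  rw [h2] at h1
  simp at h1

lemma haar_sigmaFinite (μ : Measure K) (hμ : IsHaar μ) : SigmaFinite μ := by
  refine ⟨⟨⟨fun k => KB K (-(k : ℤ)), fun _ => trivial, fun k => haar_ball_lt_top μ hμ _, ?_⟩⟩⟩
  ext x
  simp only [Set.mem_iUnion, Set.mem_univ, iff_true]
  obtain ⟨m, hm⟩ := exists_ord_lb x
  refine ⟨(-m).toNat, ?_⟩
  show ((-((-m).toNat : ℤ) : ℤ) : WithTop ℤ) ≤ ord x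
  refine le_trans ?_ hm
  have : (m : ℤ) ≥ -((-m).toNat : ℤ) := by omega
  exact_mod_cast this

lemma mp_add (μ : Measure K) (hμ : IsHaar μ) (c : K) :
    MeasurePreserving (fun x : K => x + c) μ μ := by
  have hmeas : Measurable fun x : K => x + c := (continuous_add_right c).measurable
  refine ⟨hmeas, ?_⟩
  refine Measure.ext fun s hs => ?_
  rw [Measure.map_apply hmeas hs]
  have : (fun x : K => x + c) ⁻¹' s = (fun x : K => c + x) ⁻¹' s := by
    ext x; simp [add_comm]
  rw [this, hμ.1]

section Pi
variable [SecondCountableTopology K] {ι : Type} [Fintype ι]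

lemma mp_addVec (μ : Measure K) (hμ : IsHaar μ) (c : ι → K) :
    MeasurePreserving (fun x : ι → K => x + c) (piHaar μ ι) (piHaar μ ι) := by
  haveI := haar_sigmaFinite μ hμ
  have hmeas : Measurable (fun x : ι → K => x + c) :=
    (continuous_add_right c).measurable
  refine ⟨hmeas, ?_⟩
  rw [piHaar]
  refine (Measure.pi_eq fun s hs => ?_).symm
  rw [Measure.map_apply hmeas (MeasurableSet.univ_pi hs)]
  have hpre : (fun x : ι → K => x + c) ⁻¹' (Set.pi Set.univ s)
      = Set.pi Set.univ (fun i => (fun y : K => y + c i) ⁻¹' (s i)) := by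
    ext x
    simp only [Set.mem_preimage, Set.mem_pi, Set.mem_univ, true_implies]
    rfl
  rw [hpre, Measure.pi_pi]
  refine Finset.prod_congr rfl fun i _ => ?_
  exact (mp_add μ hμ (c i)).measure_preimage (hs i).nullMeasurableSet

lemma piHaar_addRightInvariant (μ : Measure K) (hμ : IsHaar μ) :
    (piHaar μ ι).IsAddRightInvariant :=
  ⟨fun c => (mp_addVec μ hμ c).map_eq⟩

lemma measurableAdd_vec : MeasurableAdd (ι → K) :=
  ⟨fun c => (continuous_const.add continuous_id).measurable,
   fun c => (continuous_id.add continuous_const).measurable⟩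

end Pi
end SPAux
namespace SPAux

open NALocalField Filter Topology

set_option linter.unusedSectionVars false

variable {K : Type} [Field K] [TopologicalSpace K] [IsTopologicalRing K] [NALocalField K]

lemma psi_continuous {ψ : AddChar K ℂ} (hψ : IsStandardChar ψ) : Continuous ψ := by
  rw [continuous_iff_continuousAt]
  intro x
  have hev : ∀ᶠ y in nhds x, ψ y = ψ x := by
    refine Filter.mem_of_superset ((nhds_basis x).mem_of_mem (i := 1) trivial) ?_
    intro y hy
    show ψ y = ψ x
    have hy' : (1 : WithTop ℤ) ≤ ord (y - x) := by exact_mod_cast hy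
    rw [show y = x + (y - x) by ring, AddChar.map_add_eq_mul, hψ.1 _ hy', mul_one]
  exact (Filter.EventuallyEq.continuousAt hev)

lemma slice_continuousAt {n r : ℕ} {p : (Fin n → K) → (Fin r → K) → K}
    {X : Set (Fin n → K)} {V : Set (Fin r → K)} (hX : IsOpen X)
    (hp : StrictC1Pair p X V) {x₀ : Fin n → K} {η : Fin r → K}
    (hx₀ : x₀ ∈ X) (hη : η ∈ V) :
    ContinuousAt (fun x => p x η) x₀ := by
  obtain ⟨a, b, hab⟩ := hp (x₀, η) (Set.mk_mem_prod hx₀ hη)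
  have h0 := hab 0
  -- transport to a neighborhood filter of x₀
  have hι : Tendsto (fun x : Fin n → K => ((x, η), (x₀, η)))
      (nhds x₀) (nhdsWithin ((x₀, η), (x₀, η)) ((X ×ˢ V) ×ˢ (X ×ˢ V))) := by
    refine tendsto_nhdsWithin_of_tendsto_nhds_of_eventually_within _ ?_ ?_
    · exact Continuous.tendsto' (by fun_prop) _ _ rfl
    · filter_upwards [hX.mem_nhds hx₀] with x hx
      exact Set.mk_mem_prod (Set.mk_mem_prod hx hη) (Set.mk_mem_prod hx₀ hη)
  have hE := hι.eventually h0
  simp only [sub_self, mul_zero, Finset.sum_const_zero, sub_zero, ordVec_zero,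
    WithTop.coe_zero, inf_top_eq, zero_add] at hE
  have hE' : ∀ᶠ x in nhds x₀,
      ordVec (x - x₀) ≤ ord (p x η - p x₀ η - ∑ i, a i * (x i - x₀ i)) := hE
  rw [ContinuousAt]
  refine (nhds_basis (p x₀ η)).tendsto_right_iff.2 ?_
  intro N _
  obtain ⟨L, hL⟩ := exists_ordVec_lb a
  have hball : ∀ᶠ x in nhds x₀,
      ((max N (N - L) : ℤ) : WithTop ℤ) ≤ ordVec (x - x₀) := vball_mem_nhds x₀ _
  filter_upwards [hE', hball] with x h1 h2
  show (N : WithTop ℤ) ≤ ord (p x η - p x₀ η)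
  have hlin : (N : WithTop ℤ) ≤ ord (∑ i, a i * (x i - x₀ i)) := by
    refine le_trans ?_ (ord_sum_mul a (x - x₀))
    calc (N : WithTop ℤ) = (L : WithTop ℤ) + ((N - L : ℤ) : WithTop ℤ) := by
          rw [← WithTop.coe_add]; norm_cast; omega
      _ ≤ ordVec a + ordVec (x - x₀) := by
          refine add_le_add hL (le_trans ?_ h2)
          exact_mod_cast (by omega : (N - L : ℤ) ≤ max N (N - L))
  have herr : (N : WithTop ℤ) ≤ ord (p x η - p x₀ η - ∑ i, a i * (x i - x₀ i)) := by
    refine le_trans ?_ h1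
    refine le_trans ?_ h2
    exact_mod_cast (by omega : (N : ℤ) ≤ max N (N - L))
  have hsplit : p x η - p x₀ η
      = (p x η - p x₀ η - ∑ i, a i * (x i - x₀ i)) + ∑ i, a i * (x i - x₀ i) := by ring
  rw [hsplit]
  exact le_trans (le_min herr hlin) (ord_add _ _)

end SPAux
set_option maxHeartbeats 1000000

/-- non-archimedean stationary phase. Let `X ⊆ K^n` and `V ⊆ K^r` be
open, `p : X × V → K` strict `C¹`, and `φ ∈ S(X)`. Suppose `|grad_x p(x,η)| ≥ δ > 0` on
`Supp(φ) × V` (valuatively: `ordVec (G x η) ≤ δ`), and the second-order remainder matrix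
`R` in `p(x+y,η) = p(x,η) + (grad_x p(x,η)|y) + (R(x,y,η)y|y)` is bounded for `x`, `x+y`
in `Supp(φ)` and `η ∈ V` (valuatively: `ord` of the entries is bounded below). Then there
is `r₀ ∈ ℤ`, independent of `η ∈ V`, such that for every `η ∈ V` the function
`λ ↦ ∫_X φ(x) ψ(λ p(x,η)) dx` on `K^×` is supported in the ball `B_{r₀}`. -/
theorem stationary_phase {K : Type} [Field K] [TopologicalSpace K] [IsTopologicalRing K]
    [NALocalField K] [MeasurableSpace K] [BorelSpace K]
    (μ : Measure K) (hμ : IsHaar μ) (ψ : AddChar K ℂ) (hψ : IsStandardChar ψ)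
    {n r : ℕ} (X : Set (Fin n → K)) (V : Set (Fin r → K)) (hX : IsOpen X) (hV : IsOpen V)
    (p : (Fin n → K) → (Fin r → K) → K) (hp : StrictC1Pair p X V)
    (φ : (Fin n → K) → ℂ) (hφ : IsSBOn X φ)
    (G : (Fin n → K) → (Fin r → K) → Fin n → K)
    (R : (Fin n → K) → (Fin n → K) → (Fin r → K) → Matrix (Fin n) (Fin n) K)
    (hTaylor : ∀ (x y : Fin n → K), ∀ η ∈ V, x ∈ X → x + y ∈ X →
        p (x + y) η = p x η + (∑ i, G x η i * y i) + ∑ i, (∑ j, R x y η i j * y j) * y i)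
    (δ : ℤ) (hG : ∀ x ∈ tsupport φ, ∀ η ∈ V, ordVec (G x η) ≤ (δ : WithTop ℤ))
    (C : ℤ) (hR : ∀ (x y : Fin n → K), ∀ η ∈ V, x ∈ tsupport φ → x + y ∈ tsupport φ →
        ∀ i j : Fin n, (C : WithTop ℤ) ≤ NALocalField.ord (R x y η i j)) :
    ∃ r₀ : ℤ, ∀ η ∈ V, ∀ lam : K, lam ≠ 0 →
      (∫ x, φ x * ψ (lam * p x η) ∂(piHaar μ (Fin n))) ≠ 0 →
        (r₀ : WithTop ℤ) ≤ NALocalField.ord lam := by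
  classical
  obtain ⟨hφlc, hφcs, hφsupp⟩ := hφ
  haveI hSC : SecondCountableTopology K := SPAux.secondCountable
  haveI hSF : SigmaFinite μ := SPAux.haar_sigmaFinite μ hμ
  haveI hSFpi : SigmaFinite (piHaar μ (Fin n)) := by unfold piHaar; infer_instance
  haveI hInv : (piHaar μ (Fin n)).IsAddRightInvariant := SPAux.piHaar_addRightInvariant μ hμ
  haveI hMA : MeasurableAdd (Fin n → K) := SPAux.measurableAdd_vec
  obtain ⟨m₀, hm₀⟩ := SPAux.unif_const hφlc hφcs
  refine ⟨min (C - 1 - 2*δ) (-δ - m₀), ?_⟩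
  intro η hη lam hlam hI
  by_contra hcon
  apply hI
  obtain ⟨l, hl⟩ : ∃ l : ℤ, NALocalField.ord lam = (l : WithTop ℤ) := by
    cases h : NALocalField.ord lam with
    | top => exact absurd ((NALocalField.ord_eq_top_iff lam).1 h) hlam
    | coe a => exact ⟨a, rfl⟩
  have hllt : l < min (C - 1 - 2*δ) (-δ - m₀) := by
    rw [hl] at hcon
    exact_mod_cast not_le.1 hcon
  have hl1 : l < C - 1 - 2*δ := lt_of_lt_of_le hllt (min_le_left _ _)
  have hl2 : l < -δ - m₀ := lt_of_lt_of_le hllt (min_le_right _ _)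
  set m : ℤ := -δ - l with hmdef
  have hmm₀ : m₀ ≤ m := by omega
  have hCm : (2:ℤ) ≤ l + C + 2*m := by omega
  -- the averaging ball
  set W : Set (Fin n → K) := {y : Fin n → K | (m : WithTop ℤ) ≤ ordVec y} with hWdef
  have hWmeas : MeasurableSet W := (SPAux.isOpen_VB m).measurableSet
  have hWlt : piHaar μ (Fin n) W < ⊤ := by
    rw [hWdef, SPAux.VB_eq_pi, piHaar, Measure.pi_pi, Finset.prod_const]
    exact ENNReal.pow_lt_top (SPAux.haar_ball_lt_top μ hμ m)
  have hWne : piHaar μ (Fin n) W ≠ 0 := by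
    rw [hWdef, SPAux.VB_eq_pi, piHaar, Measure.pi_pi, Finset.prod_const]
    exact pow_ne_zero _ (SPAux.haar_ball_ne_zero μ hμ m)
  -- the integrand
  set f : (Fin n → K) → ℂ := fun x => φ x * ψ (lam * p x η) with hfdef
  have hfc : Continuous f := by
    rw [continuous_iff_continuousAt]
    intro x
    by_cases hx : x ∈ X
    · exact (hφlc.continuous.continuousAt).mul
        (((SPAux.psi_continuous hψ).continuousAt).comp
          (continuousAt_const.mul (SPAux.slice_continuousAt hX hp hx hη)))
    · have hev : ∀ᶠ y in nhds x, f y = 0 := by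
        have hxn : x ∉ tsupport φ := fun h => hx (hφsupp h)
        filter_upwards [(isClosed_tsupport φ).isOpen_compl.mem_nhds hxn] with y hy
        simp [hfdef, image_eq_zero_of_notMem_tsupport hy]
      exact Filter.EventuallyEq.continuousAt (y := (0:ℂ))
        (by filter_upwards [hev] with y hy; exact hy)
  have hfcs : HasCompactSupport f := hφcs.mul_right
  have hfsupp' : tsupport f ⊆ tsupport φ := tsupport_mul_subset_left
  obtain ⟨Cf, hCf⟩ := hfc.bounded_above_of_compact_support hfcs
  obtain ⟨M, hM⟩ := SPAux.compact_subset_vball (hφcs : IsCompact (tsupport φ))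
  set T : Set (Fin n → K) := {x : Fin n → K | ((min M m : ℤ) : WithTop ℤ) ≤ ordVec x} with hTdef
  have hTmeas : MeasurableSet T := (SPAux.isOpen_VB (min M m)).measurableSet
  have hTlt : piHaar μ (Fin n) T < ⊤ := by
    rw [hTdef, SPAux.VB_eq_pi, piHaar, Measure.pi_pi, Finset.prod_const]
    exact ENNReal.pow_lt_top (SPAux.haar_ball_lt_top μ hμ _)
  -- membership facts
  have hmemW : ∀ y : Fin n → K, y ∈ W ↔ (m : WithTop ℤ) ≤ ordVec y := fun y => Iff.rfl
  -- local constancy on W-translates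
  have hconst : ∀ (x y : Fin n → K), y ∈ W → φ (x + y) = φ x := by
    intro x y hy
    refine hm₀ x y (le_trans ?_ hy)
    exact_mod_cast hmm₀
  -- the double integrand
  set D : (Fin n → K) → (Fin n → K) → ℂ :=
    fun y x => Set.indicator W (fun y' => f (x + y')) y with hDdef
  -- (C) the inner integral vanishes
  have key2 : ∀ x : Fin n → K, (∫ y in W, f (x + y) ∂(piHaar μ (Fin n))) = 0 := by
    intro x
    by_cases hx : φ x = 0
    · have hzero : Set.EqOn (fun y => f (x + y)) (fun _ => (0:ℂ)) W := by
        intro y hy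
        simp only [hfdef]
        rw [hconst x y hy, hx, zero_mul]
      rw [setIntegral_congr_fun hWmeas hzero]
      simp
    · have hxsupp : x ∈ tsupport φ := subset_tsupport φ hx
      have hxX : x ∈ X := hφsupp hxsupp
      -- Taylor expansion step
      have hstep : Set.EqOn (fun y => f (x + y))
          (fun y => (φ x * ψ (lam * p x η)) * ψ (lam * ∑ i, G x η i * y i)) W := by
        intro y hy
        have hyv : (m : WithTop ℤ) ≤ ordVec y := hy
        have hφeq : φ (x + y) = φ x := hconst x y hy
        have hxysupp : x + y ∈ tsupport φ := by
          apply subset_tsupport φ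
          rw [Function.mem_support, hφeq]
          exact hx
        have hxyX : x + y ∈ X := hφsupp hxysupp
        have htay := hTaylor x y η hη hxX hxyX
        have hRone : ψ (lam * ∑ i, (∑ j, R x y η i j * y j) * y i) = 1 := by
          apply hψ.1
          have hordy : ∀ i, (m : WithTop ℤ) ≤ NALocalField.ord (y i) :=
            fun i => le_trans hyv (SPAux.ordVec_le y i)
          have hterm : ∀ i, ((C + m + m : ℤ) : WithTop ℤ)
              ≤ NALocalField.ord ((∑ j, R x y η i j * y j) * y i) := by
            intro i
            rw [NALocalField.ord_mul]
            have hin : ((C + m : ℤ) : WithTop ℤ)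
                ≤ NALocalField.ord (∑ j, R x y η i j * y j) := by
              refine le_trans (Finset.le_inf fun j _ => ?_) (SPAux.ord_sum _ _)
              rw [NALocalField.ord_mul]
              push_cast
              exact add_le_add (hR x y η hη hxsupp hxysupp i j) (hordy j)
            calc ((C + m + m : ℤ) : WithTop ℤ)
                = ((C + m : ℤ) : WithTop ℤ) + ((m : ℤ) : WithTop ℤ) := by
                  rw [← WithTop.coe_add]
              _ ≤ _ := add_le_add hin (hordy i)
          have hsum : ((C + m + m : ℤ) : WithTop ℤ)
              ≤ NALocalField.ord (∑ i, (∑ j, R x y η i j * y j) * y i) :=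
            le_trans (Finset.le_inf fun i _ => hterm i) (SPAux.ord_sum _ _)
          rw [NALocalField.ord_mul, hl]
          calc (1 : WithTop ℤ) ≤ ((l + (C + m + m) : ℤ) : WithTop ℤ) := by
                exact_mod_cast (by omega : (1:ℤ) ≤ l + (C + m + m))
            _ = (l : WithTop ℤ) + ((C + m + m : ℤ) : WithTop ℤ) := by
                rw [← WithTop.coe_add]
            _ ≤ _ := add_le_add le_rfl hsum
        show f (x + y) = (φ x * ψ (lam * p x η)) * ψ (lam * ∑ i, G x η i * y i)
        simp only [hfdef]
        rw [hφeq, htay, mul_add, mul_add, AddChar.map_add_eq_mul, AddChar.map_add_eq_mul,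
          hRone, mul_one, mul_assoc]
      rw [setIntegral_congr_fun hWmeas hstep]
      rw [MeasureTheory.integral_const_mul]
      -- now the character average vanishes
      have hGx := hG x hxsupp η hη
      have hne : (Finset.univ : Finset (Fin n)).Nonempty := by
        rcases Finset.univ.eq_empty_or_nonempty (α := Fin n) with h | h
        · exfalso
          have htop : ordVec (G x η) = ⊤ := by rw [ordVec, h, Finset.inf_empty]
          rw [htop] at hGx
          exact absurd hGx (by simp)
        · exact h
      obtain ⟨i, -, hieq⟩ := Finset.exists_mem_eq_inf Finset.univ hne
        (fun i => NALocalField.ord (G x η i))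
      have hGi : NALocalField.ord (G x η i) ≤ (δ : WithTop ℤ) := by
        rw [show NALocalField.ord (G x η i) = ordVec (G x η) from hieq.symm]
        exact hGx
      have hGine : G x η i ≠ 0 := by
        intro h
        rw [h, SPAux.ord_zero] at hGi
        exact absurd hGi (by simp)
      set c : K := lam * G x η i with hcdef
      have hc0 : c ≠ 0 := mul_ne_zero hlam hGine
      obtain ⟨e, he⟩ : ∃ e : ℤ, NALocalField.ord c = (e : WithTop ℤ) := by
        cases h : NALocalField.ord c with
        | top => exact absurd ((NALocalField.ord_eq_top_iff c).1 h) hc0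
        | coe a => exact ⟨a, rfl⟩
      have hele : e ≤ l + δ := by
        have hcc : NALocalField.ord c ≤ ((l + δ : ℤ) : WithTop ℤ) := by
          rw [hcdef, NALocalField.ord_mul, hl,
            show ((l + δ : ℤ) : WithTop ℤ) = (l : WithTop ℤ) + (δ : WithTop ℤ) from
              by rw [← WithTop.coe_add]]
          exact add_le_add le_rfl hGi
        rw [he] at hcc
        exact_mod_cast hcc
      obtain ⟨x₀, hx₀ord, hx₀ne⟩ := hψ.2
      set y₀ : Fin n → K := fun j => if j = i then x₀ / c else 0 with hy₀def
      have hy₀W : y₀ ∈ W := by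
        show (m : WithTop ℤ) ≤ ordVec y₀
        rw [SPAux.le_ordVec_iff]
        intro j
        by_cases hj : j = i
        · have hval : y₀ j = x₀ * c⁻¹ := by rw [hy₀def]; simp [hj, div_eq_mul_inv]
          have hinv : NALocalField.ord c⁻¹ = ((-e : ℤ) : WithTop ℤ) := by
            have h := NALocalField.ord_mul c c⁻¹
            rw [mul_inv_cancel₀ hc0, SPAux.ord_one, he] at h
            cases hoc : NALocalField.ord c⁻¹ with
            | top => rw [hoc] at h; simp at h
            | coe u =>
                rw [hoc, ← WithTop.coe_add] at h
                have h2 : (0:ℤ) = e + u := by exact_mod_cast h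
                have h3 : u = -e := by omega
                exact_mod_cast h3
          rw [hval, NALocalField.ord_mul, hinv]
          have hm_le : (m : ℤ) ≤ 0 + (-e) := by omega
          calc (m : WithTop ℤ) ≤ (((0:ℤ) + (-e) : ℤ) : WithTop ℤ) := by exact_mod_cast hm_le
            _ = ((0:ℤ) : WithTop ℤ) + ((-e : ℤ) : WithTop ℤ) := by rw [← WithTop.coe_add]
            _ ≤ NALocalField.ord x₀ + ((-e : ℤ) : WithTop ℤ) :=
                add_le_add (by simpa using hx₀ord) le_rfl
        · have hval : y₀ j = 0 := by rw [hy₀def]; simp [hj]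
          rw [hval, SPAux.ord_zero]
          exact le_top
      have hsum₀ : lam * ∑ j, G x η j * y₀ j = x₀ := by
        have hsum : ∑ j, G x η j * y₀ j = G x η i * (x₀ / c) := by
          rw [hy₀def]
          rw [Finset.sum_eq_single i]
          · simp
          · intro j _ hj; simp [hj]
          · intro h; exact absurd (Finset.mem_univ i) h
        rw [hsum, hcdef]
        rw [show lam * (G x η i * (x₀ / (lam * G x η i)))
            = x₀ / (lam * G x η i) * (lam * G x η i) from by ring]
        exact div_mul_cancel₀ x₀ (by rw [← hcdef]; exact hc0)
      have hpre : (fun y : Fin n → K => y + y₀) ⁻¹' W = W := by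
        ext y
        simp only [Set.mem_preimage]
        constructor
        · intro h
          have hrw : y = (y + y₀) + (-y₀) := by ring
          show (m : WithTop ℤ) ≤ ordVec y
          rw [hrw]
          refine le_trans (le_min h ?_) (SPAux.min_le_ordVec_add _ _)
          rw [SPAux.ordVec_neg]
          exact hy₀W
        · intro h
          show (m : WithTop ℤ) ≤ ordVec (y + y₀)
          exact le_trans (le_min h hy₀W) (SPAux.min_le_ordVec_add _ _)
      have hemb : MeasurableEmbedding (fun y : Fin n → K => y + y₀) :=
        (Homeomorph.addRight y₀).measurableEmbedding
      have htrans := (SPAux.mp_addVec μ hμ y₀).setIntegral_preimage_emb hemb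
        (fun y => ψ (lam * ∑ j, G x η j * y j)) W
      rw [hpre] at htrans
      have hpoint : ∀ y : Fin n → K, ψ (lam * ∑ j, G x η j * (y + y₀) j)
          = ψ (lam * ∑ j, G x η j * y j) * ψ x₀ := by
        intro y
        have harg : lam * ∑ j, G x η j * (y + y₀) j
            = lam * ∑ j, G x η j * y j + x₀ := by
          rw [← hsum₀, ← mul_add, ← Finset.sum_add_distrib]
          congr 1
          refine Finset.sum_congr rfl fun j _ => ?_
          show G x η j * (y j + y₀ j) = _
          ring
        rw [harg, AddChar.map_add_eq_mul]
      have hJmul : (∫ y in W, ψ (lam * ∑ j, G x η j * y j) ∂(piHaar μ (Fin n))) * ψ x₀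
          = ∫ y in W, ψ (lam * ∑ j, G x η j * y j) ∂(piHaar μ (Fin n)) := by
        have h1 : (∫ y in W, ψ (lam * ∑ j, G x η j * (y + y₀) j) ∂(piHaar μ (Fin n)))
            = (∫ y in W, ψ (lam * ∑ j, G x η j * y j) ∂(piHaar μ (Fin n))) * ψ x₀ := by
          rw [show (fun y : Fin n → K => ψ (lam * ∑ j, G x η j * (y + y₀) j)) =
            (fun y : Fin n → K => ψ (lam * ∑ j, G x η j * y j) * ψ x₀) from funext hpoint]
          exact MeasureTheory.integral_mul_const _ _
        rw [← h1]
        exact htrans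
      have hJ : (∫ y in W, ψ (lam * ∑ j, G x η j * y j) ∂(piHaar μ (Fin n))) = 0 := by
        have hzz : (∫ y in W, ψ (lam * ∑ j, G x η j * y j) ∂(piHaar μ (Fin n)))
            * (ψ x₀ - 1) = 0 := by
          rw [mul_sub, hJmul, mul_one, sub_self]
        exact (mul_eq_zero.1 hzz).resolve_right (sub_ne_zero.2 hx₀ne)
      rw [hJ, mul_zero]
  -- integrability of the double integrand
  have hDeq : Function.uncurry D
      = fun z : (Fin n → K) × (Fin n → K) =>
          Set.indicator (W ×ˢ (Set.univ : Set (Fin n → K))) (fun z => f (z.2 + z.1)) z := by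
    funext z
    by_cases hz : z.1 ∈ W
    · simp [Function.uncurry, hDdef, Set.indicator_of_mem, hz, Set.mem_prod]
    · simp [Function.uncurry, hDdef, Set.indicator_of_notMem, hz, Set.mem_prod]
  have hDmeas : AEStronglyMeasurable (Function.uncurry D)
      ((piHaar μ (Fin n)).prod (piHaar μ (Fin n))) := by
    rw [hDeq]
    exact (((hfc.comp (continuous_snd.add continuous_fst)).stronglyMeasurable).indicator
      (hWmeas.prod MeasurableSet.univ)).aestronglyMeasurable
  have hCf0 : 0 ≤ Cf := le_trans (norm_nonneg (f 0)) (hCf 0)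
  have hbound : ∀ z : (Fin n → K) × (Fin n → K),
      ‖Function.uncurry D z‖ ≤ Set.indicator (W ×ˢ T) (fun _ => Cf) z := by
    intro z
    show ‖Set.indicator W (fun y' => f (z.2 + y')) z.1‖
        ≤ Set.indicator (W ×ˢ T) (fun _ => Cf) z
    by_cases hz1 : z.1 ∈ W
    · rw [Set.indicator_of_mem hz1]
      by_cases hz2 : f (z.2 + z.1) = 0
      · rw [hz2, norm_zero]
        exact Set.indicator_nonneg (fun _ _ => hCf0) z
      · have hzsupp : z.2 + z.1 ∈ tsupport φ :=
          hfsupp' (subset_tsupport f hz2)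
        have hz2T : z.2 ∈ T := by
          have h1 : ((M:ℤ):WithTop ℤ) ≤ ordVec (z.2 + z.1) := hM _ hzsupp
          have h2 : (m : WithTop ℤ) ≤ ordVec z.1 := hz1
          show ((min M m : ℤ) : WithTop ℤ) ≤ ordVec z.2
          rw [show z.2 = (z.2 + z.1) + (-z.1) from by ring]
          refine le_trans (le_min ?_ ?_) (SPAux.min_le_ordVec_add _ _)
          · exact le_trans (by exact_mod_cast min_le_left M m) h1
          · rw [SPAux.ordVec_neg]
            exact le_trans (by exact_mod_cast min_le_right M m) h2
        rw [Set.indicator_of_mem (Set.mk_mem_prod hz1 hz2T)]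
        exact hCf _
    · rw [Set.indicator_of_notMem hz1,
        Set.indicator_of_notMem (fun h => hz1 (Set.mem_prod.1 h).1)]
      simp
  have hgInt : Integrable (Set.indicator (W ×ˢ T) (fun _ => Cf))
      ((piHaar μ (Fin n)).prod (piHaar μ (Fin n))) := by
    rw [integrable_indicator_iff (hWmeas.prod hTmeas)]
    refine integrableOn_const (ne_of_lt ?_)
    rw [Measure.prod_prod]
    exact ENNReal.mul_lt_top hWlt hTlt
  have hDint : Integrable (Function.uncurry D)
      ((piHaar μ (Fin n)).prod (piHaar μ (Fin n))) :=
    hgInt.mono' hDmeas (Filter.Eventually.of_forall hbound)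
  have hswap := MeasureTheory.integral_integral_swap hDint
  -- left side
  have hleft : (∫ y, ∫ x, D y x ∂(piHaar μ (Fin n)) ∂(piHaar μ (Fin n)))
      = (piHaar μ (Fin n) W).toReal • (∫ x, f x ∂(piHaar μ (Fin n))) := by
    have hin : ∀ y : Fin n → K, (∫ x, D y x ∂(piHaar μ (Fin n)))
        = Set.indicator W (fun _ => ∫ x, f x ∂(piHaar μ (Fin n))) y := by
      intro y
      by_cases hy : y ∈ W
      · rw [Set.indicator_of_mem hy]
        have : (fun x => D y x) = fun x => f (x + y) := by
          funext x
          rw [hDdef]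
          simp only []
          rw [Set.indicator_of_mem hy]
        rw [this]
        exact MeasureTheory.integral_add_right_eq_self f y
      · rw [Set.indicator_of_notMem hy]
        have : (fun x => D y x) = fun _ => (0:ℂ) := by
          funext x
          rw [hDdef]
          simp only []
          rw [Set.indicator_of_notMem hy]
        rw [this]
        exact integral_zero _ _
    rw [show (fun y => ∫ x, D y x ∂(piHaar μ (Fin n)))
        = Set.indicator W (fun _ => ∫ x, f x ∂(piHaar μ (Fin n))) from funext hin]
    exact MeasureTheory.integral_indicator_const _ hWmeas
  -- right side
  have hright : (∫ x, ∫ y, D y x ∂(piHaar μ (Fin n)) ∂(piHaar μ (Fin n))) = 0 := by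
    have hin2 : ∀ x : Fin n → K, (∫ y, D y x ∂(piHaar μ (Fin n))) = 0 := by
      intro x
      have : (∫ y, D y x ∂(piHaar μ (Fin n)))
          = ∫ y in W, f (x + y) ∂(piHaar μ (Fin n)) := by
        rw [hDdef]
        exact MeasureTheory.integral_indicator hWmeas
      rw [this]
      exact key2 x
    rw [show (fun x => ∫ y, D y x ∂(piHaar μ (Fin n))) = fun _ => (0:ℂ) from funext hin2]
    exact integral_zero _ _
  rw [hleft, hright] at hswap
  have htR : (piHaar μ (Fin n) W).toReal ≠ 0 :=
    ENNReal.toReal_ne_zero.2 ⟨hWne, hWlt.ne⟩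
  have := smul_eq_zero.1 hswap
  rcases this with h | h
  · exact absurd h htR
  · exact h
end
end

section
/- Let Λ be an open subgroup of finite index of (K^×,×), let d ≥ 1, and let S be a closed subset of K^d × (K^d ∖ {0}) which is Λ-conical in the second factor, i.e. (x,λξ) ∈ S whenever (x,ξ) ∈ S and λ ∈ Λ. Then there exists a distribution u ∈ S'(K^d) such that WF_Λ(u) = S. -/
open MeasureTheory Filter Topology
open scoped BigOperators Classical

noncomputable section

variable {K : Type} [Field K] [TopologicalSpace K] [IsTopologicalRing K] [NALocalField K]

/-- `Λ` is an open subgroup of finite index of `(K^×, ×)`. -/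
structure IsOpenFinIndexSubgroup (Λ : Set K) : Prop where
  one_mem : (1 : K) ∈ Λ
  mul_mem : ∀ a ∈ Λ, ∀ b ∈ Λ, a * b ∈ Λ
  inv_mem : ∀ a ∈ Λ, a⁻¹ ∈ Λ
  ne_zero : ∀ a ∈ Λ, a ≠ 0
  isOpen : IsOpen Λ
  finiteIndex : ∃ T : Finset K, ∀ x : K, x ≠ 0 → ∃ t ∈ T, t * x ∈ Λ

section Fourier
variable (ψ : AddChar K ℂ)

/-- `F(φu)(ξ) = u(x ↦ φ(x) ψ(x·ξ))` for a functional `u`. -/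
def FTrans {ι : Type} [Fintype ι] (u : ((ι → K) → ℂ) → ℂ) (φ : (ι → K) → ℂ)
    (ξ : ι → K) : ℂ :=
  u fun x => φ x * ψ (∑ i, x i * ξ i)

/-- `Λ`-microlocal smoothness of a distribution on an open subset `U ⊆ K^ι` at a point
`(x₀, ξ₀)`: there are neighborhoods `U₀ ∋ x₀` and `V₀ ∋ ξ₀` such that for every
Schwartz–Bruhat `φ` supported in `U₀` there is `N ∈ ℤ` with `F(φu)(λξ) = 0` for all
`ξ ∈ V₀` and all `λ ∈ Λ` with `ord λ < N`. -/
def LamSmoothAt (Λ : Set K) {ι : Type} [Fintype ι] (U : Set (ι → K))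
    (u : ((ι → K) → ℂ) → ℂ) (x₀ ξ₀ : ι → K) : Prop :=
  ∃ U₀ V₀ : Set (ι → K), IsOpen U₀ ∧ IsOpen V₀ ∧ x₀ ∈ U₀ ∧ ξ₀ ∈ V₀ ∧
    ∀ φ : (ι → K) → ℂ, IsSBOn U φ → tsupport φ ⊆ U₀ →
      ∃ N : ℤ, ∀ lam ∈ Λ, NALocalField.ord lam < (N : WithTop ℤ) →
        ∀ ξ ∈ V₀, FTrans ψ u φ (fun i => lam * ξ i) = 0

/-- The `Λ`-wave front set of a distribution on an open subset `U ⊆ K^ι`: the complement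
in `U × (K^ι ∖ {0})` of the set of `Λ`-smooth points. -/
def WFset (Λ : Set K) {ι : Type} [Fintype ι] (U : Set (ι → K))
    (u : ((ι → K) → ℂ) → ℂ) : Set ((ι → K) × (ι → K)) :=
  {p | p.1 ∈ U ∧ p.2 ≠ 0 ∧ ¬ LamSmoothAt ψ Λ U u p.1 p.2}

end Fourier


set_option linter.unusedSectionVars false
set_option linter.unusedVariables false
set_option maxHeartbeats 1000000

namespace Aux

open NALocalField

lemma ord_zero : ord (0 : K) = ⊤ := (ord_eq_top_iff 0).2 rfl

lemma ord_ne_top {x : K} (hx : x ≠ 0) : ord x ≠ ⊤ := fun h => hx ((ord_eq_top_iff x).1 h)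

lemma ord_one : ord (1 : K) = 0 := by
  have h := ord_mul (1 : K) 1
  rw [one_mul] at h
  obtain ⟨n, hn⟩ := WithTop.ne_top_iff_exists.1 (ord_ne_top (one_ne_zero : (1:K) ≠ 0))
  rw [← hn, ← WithTop.coe_add, WithTop.coe_inj] at h
  have : n = 0 := by omega
  rw [← hn, this]; rfl

lemma ord_neg (x : K) : ord (-x) = ord x := by
  rcases eq_or_ne x 0 with rfl | hx
  · rw [neg_zero]
  have hm : ord ((-1 : K) * (-1)) = ord (-1 : K) + ord (-1 : K) := ord_mul _ _
  rw [neg_mul_neg, one_mul, ord_one] at hm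
  obtain ⟨n, hn⟩ := WithTop.ne_top_iff_exists.1 (ord_ne_top (neg_ne_zero.2 (one_ne_zero : (1:K) ≠ 0)))
  rw [← hn, ← WithTop.coe_add, eq_comm, WithTop.coe_eq_zero] at hm
  have hn0 : n = 0 := by omega
  have : ord (-x) = ord (-1 : K) + ord x := by rw [← ord_mul]; ring_nf
  rw [this, ← hn, hn0]; simp

lemma ord_inv {x : K} (hx : x ≠ 0) {m : ℤ} (hm : ord x = (m : WithTop ℤ)) :
    ord x⁻¹ = ((-m : ℤ) : WithTop ℤ) := by
  have h : ord (x * x⁻¹) = ord x + ord x⁻¹ := ord_mul _ _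
  rw [mul_inv_cancel₀ hx, ord_one, hm] at h
  obtain ⟨n, hn⟩ := WithTop.ne_top_iff_exists.1 (ord_ne_top (inv_ne_zero hx))
  rw [← hn, ← WithTop.coe_add, eq_comm, WithTop.coe_eq_zero] at h
  rw [← hn, WithTop.coe_inj]; omega

lemma ord_add_eq_left {x y : K} (h : ord x < ord y) : ord (x + y) = ord x := by
  refine le_antisymm ?_ ?_
  · have h2 := ord_add (x + y) (-y)
    rw [add_neg_cancel_right, ord_neg] at h2
    rcases min_le_iff.1 h2 with h3 | h3
    · exact h3
    · exact absurd (lt_of_lt_of_le h h3) (lt_irrefl _)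
  · calc ord x = min (ord x) (ord y) := (min_eq_left h.le).symm
      _ ≤ ord (x + y) := ord_add x y

section Vec
variable {ι : Type} [Fintype ι]

lemma ordVec_le (v : ι → K) (i : ι) : ordVec v ≤ ord (v i) :=
  Finset.inf_le (Finset.mem_univ i)

lemma le_ordVec {v : ι → K} {c : WithTop ℤ} (h : ∀ i, c ≤ ord (v i)) : c ≤ ordVec v :=
  Finset.le_inf fun i _ => h i

lemma exists_ordVec_eq [Nonempty ι] (v : ι → K) : ∃ i, ordVec v = ord (v i) := by
  obtain ⟨i, _, hi⟩ := Finset.exists_mem_eq_inf Finset.univ Finset.univ_nonempty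
    (fun i => ord (v i))
  exact ⟨i, hi⟩

lemma ordVec_ne_top [Nonempty ι] {v : ι → K} (hv : v ≠ 0) : ordVec v ≠ ⊤ := by
  obtain ⟨i, hi⟩ : ∃ i, v i ≠ 0 := by
    by_contra h; push_neg at h; exact hv (funext h)
  intro h
  have := ordVec_le v i
  rw [h, top_le_iff] at this
  exact ord_ne_top hi this

lemma ordVec_zero : ordVec (0 : ι → K) = ⊤ :=
  le_antisymm le_top (le_ordVec fun i => by rw [Pi.zero_apply, ord_zero])

lemma ordVec_neg (v : ι → K) : ordVec (-v) = ordVec v := by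
  unfold ordVec
  congr 1; funext i; rw [Pi.neg_apply, ord_neg]

lemma min_le_ordVec_add (u v : ι → K) : min (ordVec u) (ordVec v) ≤ ordVec (u + v) :=
  le_ordVec fun i => le_trans (min_le_min (ordVec_le u i) (ordVec_le v i)) (ord_add _ _)

lemma ordVec_sub_rev (u v : ι → K) : ordVec (u - v) = ordVec (v - u) := by
  rw [← ordVec_neg (u - v), neg_sub]

lemma ordVec_add_eq_left [Nonempty ι] {u v : ι → K} (h : ordVec u < ordVec v) :
    ordVec (u + v) = ordVec u := by
  refine le_antisymm ?_ (le_trans (le_of_eq (min_eq_left h.le).symm) (min_le_ordVec_add u v))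
  obtain ⟨i, hi⟩ := exists_ordVec_eq u
  have h1 : ord (u i + v i) = ord (u i) := by
    apply ord_add_eq_left
    calc ord (u i) = ordVec u := hi.symm
      _ < ordVec v := h
      _ ≤ ord (v i) := ordVec_le v i
  calc ordVec (u + v) ≤ ord ((u + v) i) := ordVec_le _ i
    _ = ord (u i) := h1
    _ = ordVec u := hi.symm

lemma ordVec_smul {c : K} (hc : c ≠ 0) {m : ℤ} (hm : ord c = (m : WithTop ℤ)) (v : ι → K)
    [Nonempty ι] : ordVec (fun i => c * v i) = (m : WithTop ℤ) + ordVec v := by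
  refine le_antisymm ?_ ?_
  · obtain ⟨i, hi⟩ := exists_ordVec_eq v
    calc ordVec (fun i => c * v i) ≤ ord (c * v i) := ordVec_le _ i
      _ = (m : WithTop ℤ) + ord (v i) := by rw [ord_mul, hm]
      _ = (m : WithTop ℤ) + ordVec v := by rw [hi]
  · refine le_ordVec fun i => ?_
    rw [ord_mul, hm]
    exact add_le_add_right (ordVec_le v i) _

end Vec

end Aux

namespace Aux
open NALocalField

section Ball
variable {ι : Type} [Fintype ι]

lemma mem_pball {x y : ι → K} {r : ℤ} :
    y ∈ pball x r ↔ ∀ i, (r : WithTop ℤ) ≤ ord (x i - y i) := by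
  show (r : WithTop ℤ) ≤ ordVec (x - y) ↔ _
  unfold ordVec
  rw [Finset.le_inf_iff]
  constructor
  · intro h i; exact h i (Finset.mem_univ i)
  · intro h i _; exact h i

lemma mem_pball' {x y : ι → K} {r : ℤ} :
    y ∈ pball x r ↔ (r : WithTop ℤ) ≤ ordVec (x - y) := Iff.rfl

lemma pball_self (x : ι → K) (r : ℤ) : x ∈ pball x r := by
  rw [mem_pball]; intro i; simp [ord_zero]

lemma mem_pball_symm {x y : ι → K} {r : ℤ} : y ∈ pball x r ↔ x ∈ pball y r := by
  rw [mem_pball', mem_pball', ordVec_sub_rev]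

lemma pball_eq_of_mem {x y : ι → K} {r : ℤ} (h : y ∈ pball x r) : pball y r = pball x r := by
  ext z
  rw [mem_pball', mem_pball']
  rw [mem_pball'] at h
  constructor
  · intro hz
    have : x - z = (x - y) + (y - z) := by ring
    rw [this]
    exact le_trans (le_min h hz) (min_le_ordVec_add _ _)
  · intro hz
    have : y - z = (y - x) + (x - z) := by ring
    rw [this]
    refine le_trans (le_min ?_ hz) (min_le_ordVec_add _ _)
    rw [ordVec_sub_rev]; exact h

lemma pball_mono (x : ι → K) {r r' : ℤ} (h : r ≤ r') : pball x r' ⊆ pball x r := by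
  intro y hy
  rw [mem_pball'] at hy ⊢
  exact le_trans (by exact_mod_cast WithTop.coe_le_coe.2 h) hy

lemma pball_eq_pi (x : ι → K) (r : ℤ) :
    pball x r = Set.pi Set.univ (fun i => {z : K | (r : WithTop ℤ) ≤ ord (x i - z)}) := by
  ext y; rw [mem_pball, Set.mem_univ_pi]; rfl

lemma isOpen_scalar_ball (c : K) (r : ℤ) : IsOpen {z : K | (r : WithTop ℤ) ≤ ord (c - z)} := by
  have : {z : K | (r : WithTop ℤ) ≤ ord (c - z)} =
      (fun z => c - z) ⁻¹' {w : K | (r : WithTop ℤ) ≤ ord w} := rfl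
  rw [this]
  exact (isOpen_ball r).preimage (by continuity)

lemma isCompact_scalar_ball (c : K) (r : ℤ) :
    IsCompact {z : K | (r : WithTop ℤ) ≤ ord (c - z)} := by
  have : {z : K | (r : WithTop ℤ) ≤ ord (c - z)} =
      (fun w => c - w) '' {w : K | (r : WithTop ℤ) ≤ ord w} := by
    ext z
    constructor
    · intro hz; exact ⟨c - z, hz, by ring⟩
    · rintro ⟨w, hw, rfl⟩; simpa using hw
  rw [this]
  exact (isCompact_ball r).image (by continuity)

lemma isOpen_pball (x : ι → K) (r : ℤ) : IsOpen (pball x r) := by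
  rw [pball_eq_pi]
  exact isOpen_set_pi Set.finite_univ fun i _ => isOpen_scalar_ball _ _

lemma isCompact_pball (x : ι → K) (r : ℤ) : IsCompact (pball x r) := by
  rw [pball_eq_pi]
  exact isCompact_univ_pi fun i => isCompact_scalar_ball _ _

end Ball

instance : T2Space K := by
  constructor
  intro x y hxy
  obtain ⟨m, hm⟩ := WithTop.ne_top_iff_exists.1 (ord_ne_top (sub_ne_zero.2 hxy))
  refine ⟨{z : K | ((m+1 : ℤ) : WithTop ℤ) ≤ ord (x - z)},
          {z : K | ((m+1 : ℤ) : WithTop ℤ) ≤ ord (y - z)},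
          isOpen_scalar_ball _ _, isOpen_scalar_ball _ _, by simp [ord_zero], by simp [ord_zero], ?_⟩
  rw [Set.disjoint_left]
  intro z hz hz'
  have h1 : ((m+1:ℤ) : WithTop ℤ) ≤ ord (x - y) := by
    have : x - y = (x - z) + (z - y) := by ring
    rw [this]
    refine le_trans (le_min hz ?_) (ord_add _ _)
    rw [← ord_neg, neg_sub]; exact hz'
  rw [← hm] at h1
  exact absurd (WithTop.coe_le_coe.1 h1) (by omega)

instance : LocallyCompactSpace K := by
  constructor
  intro x n hn
  obtain ⟨m, -, hm⟩ := (NALocalField.nhds_basis x).mem_iff.1 hn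
  refine ⟨{y : K | (m : WithTop ℤ) ≤ ord (y - x)}, ?_, hm, ?_⟩
  · exact (NALocalField.nhds_basis x).mem_of_mem trivial
  · have : {y : K | (m : WithTop ℤ) ≤ ord (y - x)} =
        {z : K | (m : WithTop ℤ) ≤ ord (x - z)} := by
      ext z; rw [Set.mem_setOf_eq, Set.mem_setOf_eq, ← ord_neg, neg_sub]
    rw [this]
    exact isCompact_scalar_ball x m

lemma exists_countable_dense_K : ∃ D : Set K, D.Countable ∧ Dense D := by
  have hcov : ∀ n : ℕ, ∃ F : Finset K,
      {x : K | ((-(n:ℤ)) : WithTop ℤ) ≤ ord x} ⊆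
        ⋃ a ∈ F, {z : K | ((n:ℤ) : WithTop ℤ) ≤ ord (a - z)} := by
    intro n
    have := (NALocalField.isCompact_ball (K := K) (-(n:ℤ))).elim_finite_subcover
      (fun a : K => {z : K | ((n:ℤ) : WithTop ℤ) ≤ ord (a - z)})
      (fun a => isOpen_scalar_ball a n) ?_
    · exact this
    · intro x hx
      exact Set.mem_iUnion.2 ⟨x, by simp [ord_zero]⟩
  choose F hF using hcov
  refine ⟨⋃ n : ℕ, (F n : Set K), Set.countable_iUnion (fun n => (F n).countable_toSet), ?_⟩
  rw [dense_iff_inter_open]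
  intro U hU ⟨x, hx⟩
  obtain ⟨m, -, hm⟩ := (NALocalField.nhds_basis x).mem_iff.1 (hU.mem_nhds hx)
  have hv : ∃ v : ℤ, ((-v : ℤ) : WithTop ℤ) ≤ ord x := by
    rcases eq_or_ne x 0 with rfl | hx0
    · exact ⟨0, by rw [ord_zero]; exact le_top⟩
    · obtain ⟨v, hv⟩ := WithTop.ne_top_iff_exists.1 (ord_ne_top hx0)
      exact ⟨-v, by rw [← hv]; simp⟩
  obtain ⟨v, hv⟩ := hv
  set n : ℕ := (max m v).toNat with hn
  have hxball : x ∈ {z : K | ((-(n:ℤ)) : WithTop ℤ) ≤ ord z} := by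
    refine le_trans ?_ hv
    have : (-(n:ℤ)) ≤ -v := by omega
    exact_mod_cast WithTop.coe_le_coe.2 this
  obtain ⟨a, ha, ha2⟩ := Set.mem_iUnion₂.1 (hF n hxball)
  refine ⟨a, ?_, Set.mem_iUnion.2 ⟨n, ha⟩⟩
  apply hm
  rw [Set.mem_setOf_eq]
  refine le_trans ?_ (ha2 : ((n:ℤ) : WithTop ℤ) ≤ ord (a - x))
  have : m ≤ (n:ℤ) := by omega
  exact_mod_cast WithTop.coe_le_coe.2 this

end Aux

namespace Aux
open NALocalField

instance : SecondCountableTopology K := by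
  obtain ⟨D, hDc, hDd⟩ := exists_countable_dense_K (K := K)
  refine TopologicalSpace.IsTopologicalBasis.secondCountableTopology
    (b := ⋃ (a ∈ D) (m : ℤ), {{z : K | (m : WithTop ℤ) ≤ ord (a - z)}}) ?_ ?_
  · refine TopologicalSpace.isTopologicalBasis_of_isOpen_of_nhds ?_ ?_
    · intro u hu
      simp only [Set.mem_iUnion, Set.mem_singleton_iff] at hu
      obtain ⟨a, -, m, rfl⟩ := hu
      exact isOpen_scalar_ball a m
    · intro x u hx hu
      obtain ⟨m, -, hm⟩ := (NALocalField.nhds_basis x).mem_iff.1 (hu.mem_nhds hx)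
      have hball : IsOpen {z : K | (m : WithTop ℤ) ≤ ord (x - z)} := isOpen_scalar_ball x m
      have hballx : x ∈ {z : K | (m : WithTop ℤ) ≤ ord (x - z)} := by simp [ord_zero]
      obtain ⟨a, haD, ha⟩ := hDd.exists_mem_open hball ⟨x, hballx⟩
      refine ⟨{z : K | (m : WithTop ℤ) ≤ ord (a - z)}, ?_, ?_, ?_⟩
      · simp only [Set.mem_iUnion, Set.mem_singleton_iff]
        exact ⟨a, haD, m, rfl⟩
      · show (m : WithTop ℤ) ≤ ord (a - x)
        have ha' : (m : WithTop ℤ) ≤ ord (x - a) := ha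
        rw [← ord_neg, neg_sub] at ha'; exact ha'
      · intro z hz
        apply hm
        show (m : WithTop ℤ) ≤ ord (z - x)
        have hza : (m : WithTop ℤ) ≤ ord (a - z) := hz
        have hax : (m : WithTop ℤ) ≤ ord (x - a) := ha
        have : z - x = -((x - a) + (a - z)) := by ring
        rw [this, ord_neg]
        exact le_trans (le_min hax hza) (ord_add _ _)
  · refine Set.Countable.biUnion (Set.Countable.mono ?_ hDc) ?_
    · exact fun x hx => hx
    · intro a _
      exact Set.countable_iUnion fun m => Set.countable_singleton _

section Nbhd
variable {ι : Type} [Fintype ι]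

lemma exists_pball_subset {U : Set (ι → K)} {x : ι → K} (hU : IsOpen U) (hx : x ∈ U) :
    ∃ r : ℤ, pball x r ⊆ U := by
  have h1 : U ∈ nhds x := hU.mem_nhds hx
  rw [nhds_pi] at h1
  obtain ⟨I, hI, t, ht, htsub⟩ := Filter.mem_pi.1 h1
  have hchoice : ∀ i : ι, ∃ r : ℤ, {y : K | (r : WithTop ℤ) ≤ ord (y - x i)} ⊆ t i := by
    intro i
    obtain ⟨r, -, hr⟩ := (NALocalField.nhds_basis (x i)).mem_iff.1 (ht i)
    exact ⟨r, hr⟩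
  choose r hr using hchoice
  obtain ⟨R, hR⟩ : ∃ R : ℤ, ∀ i, r i ≤ R := by
    rcases isEmpty_or_nonempty ι with h | h
    · exact ⟨0, fun i => absurd trivial (h.elim i)⟩
    · exact ⟨Finset.univ.sup' Finset.univ_nonempty r, fun i => Finset.le_sup' r (Finset.mem_univ i)⟩
  refine ⟨R, fun y hy => htsub ?_⟩
  intro i _
  apply hr i
  rw [mem_pball] at hy
  show (r i : WithTop ℤ) ≤ ord (y i - x i)
  rw [← ord_neg, neg_sub]
  exact le_trans (by exact_mod_cast WithTop.coe_le_coe.2 (hR i)) (hy i)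

lemma exists_pball_prod_subset {W : Set ((ι → K) × (ι → K))} {p : (ι → K) × (ι → K)}
    (hW : IsOpen W) (hp : p ∈ W) :
    ∃ r : ℤ, pball p.1 r ×ˢ pball p.2 r ⊆ W := by
  obtain ⟨U1, U2, hU1, hU2, hp1, hp2, hsub⟩ := isOpen_prod_iff.1 hW p.1 p.2 hp
  obtain ⟨r1, hr1⟩ := exists_pball_subset hU1 hp1
  obtain ⟨r2, hr2⟩ := exists_pball_subset hU2 hp2
  refine ⟨max r1 r2, fun q hq => hsub ?_⟩
  obtain ⟨hq1, hq2⟩ := hq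
  exact ⟨hr1 (pball_mono _ (le_max_left _ _) hq1), hr2 (pball_mono _ (le_max_right _ _) hq2)⟩

end Nbhd
end Aux

namespace Aux
open NALocalField

variable {ψ : AddChar K ℂ}

lemma psi_const (hψ1 : ∀ x : K, (1 : WithTop ℤ) ≤ ord x → ψ x = 1)
    {a b : K} (h : (1 : WithTop ℤ) ≤ ord (a - b)) : ψ a = ψ b := by
  have : ψ a = ψ ((a - b) + b) := by ring_nf
  rw [this, AddChar.map_add_eq_mul, hψ1 _ h, one_mul]

lemma exists_unit_char (hψ : IsStandardChar ψ) :
    ∃ x₀ : K, (0 : WithTop ℤ) ≤ ord x₀ ∧ ψ x₀ ≠ 1 := hψ.2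

/-- There is a natural number `c ≥ 1` whose image in `K` lies in the maximal ideal. -/
lemma exists_nat_in_maximal_ideal :
    ∃ c : ℕ, 1 ≤ c ∧ (1 : WithTop ℤ) ≤ ord ((c : K)) := by
  have hnat : ∀ n : ℕ, (0 : WithTop ℤ) ≤ ord ((n : K)) := by
    intro n
    induction n with
    | zero => simp [ord_zero]
    | succ n ih =>
      push_cast
      refine le_trans ?_ (ord_add (n : K) 1)
      rw [ord_one]
      exact le_min ih le_rfl
  -- cover the ring of integers by finitely many balls of radius 1
  obtain ⟨t, ht⟩ := (NALocalField.isCompact_ball (K := K) 0).elim_finite_subcover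
    (fun a : K => {z : K | (1 : WithTop ℤ) ≤ ord (a - z)})
    (fun a => isOpen_scalar_ball a 1)
    (fun x _ => Set.mem_iUnion.2 ⟨x, by simp [ord_zero]⟩)
  have hmem : ∀ n : ℕ, ∃ a ∈ t, (n : K) ∈ {z : K | (1 : WithTop ℤ) ≤ ord (a - z)} := by
    intro n
    have := ht (hnat n)
    simpa using Set.mem_iUnion₂.1 this
  choose g hg1 hg2 using hmem
  obtain ⟨n, m, hnm, heq⟩ := Finite.exists_ne_map_eq_of_infinite
    (fun n : ℕ => (⟨g n, hg1 n⟩ : {a // a ∈ t}))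
  have key : ∀ p q : ℕ, g p = g q → (1 : WithTop ℤ) ≤ ord ((p : K) - (q : K)) := by
    intro p q hpq
    have h1 : (1 : WithTop ℤ) ≤ ord (g q - (p : K)) := by rw [← hpq]; exact hg2 p
    have h2 : (1 : WithTop ℤ) ≤ ord (g q - (q : K)) := hg2 q
    have : (p : K) - (q : K) = -((g q - (p:K)) + (-(g q - (q:K)))) := by ring
    rw [this, ord_neg]
    refine le_trans (le_min h1 ?_) (ord_add _ _)
    rw [ord_neg]; exact h2
  have hgnm : g n = g m := congrArg Subtype.val heq
  rcases lt_or_gt_of_ne hnm with h | h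
  · refine ⟨m - n, by omega, ?_⟩
    have hc : ((m - n : ℕ) : K) = (m : K) - (n : K) := by
      push_cast [Nat.cast_sub h.le]; ring
    rw [hc]
    exact key m n hgnm.symm
  · refine ⟨n - m, by omega, ?_⟩
    have hc : ((n - m : ℕ) : K) = (n : K) - (m : K) := by
      push_cast [Nat.cast_sub h.le]; ring
    rw [hc]
    exact key n m hgnm

lemma norm_psi (hψ : IsStandardChar ψ) (x : K) : ‖ψ x‖ = 1 := by
  obtain ⟨c, hc1, hc2⟩ := exists_nat_in_maximal_ideal (K := K)
  -- ord (c^n : K) ≥ n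
  have hpow : ∀ n : ℕ, ((n : ℤ) : WithTop ℤ) ≤ ord (((c : K)) ^ n) := by
    intro n
    induction n with
    | zero => simp [ord_one]
    | succ n ih =>
      rw [pow_succ, ord_mul]
      push_cast
      calc ((n : ℤ) : WithTop ℤ) + 1 ≤ ord ((c:K)^n) + ord (c:K) := add_le_add ih hc2
        _ = _ := rfl
  rcases eq_or_ne x 0 with rfl | hx
  · simp
  obtain ⟨v, hv⟩ := WithTop.ne_top_iff_exists.1 (ord_ne_top hx)
  set n : ℕ := (1 - v).toNat with hn
  have h1 : (1 : WithTop ℤ) ≤ ord ((c:K)^n * x) := by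
    rw [ord_mul, ← hv]
    calc (1 : WithTop ℤ) = (((1 - v) + v : ℤ) : WithTop ℤ) := by norm_num
      _ ≤ (((n : ℤ) + v : ℤ) : WithTop ℤ) := by
          rw [WithTop.coe_le_coe]; omega
      _ = ((n : ℤ) : WithTop ℤ) + (v : WithTop ℤ) := by
          rw [← WithTop.coe_add]
      _ ≤ ord ((c:K)^n) + (v : WithTop ℤ) := by
          exact add_le_add_left (hpow n) _
  have h2 : ψ ((c:K)^n * x) = 1 := hψ.1 _ h1
  have h3 : (c:K)^n * x = (c^n : ℕ) • x := by
    rw [nsmul_eq_mul]; push_cast; ring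
  rw [h3, AddChar.map_nsmul_eq_pow] at h2
  have h4 : ‖ψ x‖ ^ (c^n) = 1 := by
    rw [← norm_pow, h2, norm_one]
  have h5 : c ^ n ≠ 0 := pow_ne_zero n (by omega)
  have h6 : ‖ψ x‖ = 1 := by
    exact (pow_left_inj₀ (norm_nonneg (ψ x)) zero_le_one h5).1 (by rw [h4, one_pow])
  exact h6

end Aux

namespace Aux
open NALocalField

/-- `Λ` contains elements of arbitrarily negative valuation. -/
lemma exists_small_ord (Λ : Set K) (hne : ∀ a ∈ Λ, a ≠ 0)
    (hfin : ∃ T : Finset K, ∀ x : K, x ≠ 0 → ∃ t ∈ T, t * x ∈ Λ) :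
    ∀ b : ℤ, ∃ l : K, l ∈ Λ ∧ ord l ≤ (b : WithTop ℤ) := by
  obtain ⟨T, hT⟩ := hfin
  obtain ⟨C, hC⟩ := (T.image (fun t => (ord t).untopD 0)).bddAbove
  intro b
  obtain ⟨x, hx⟩ := NALocalField.ord_surjective (K := K) (b - C)
  have hx0 : x ≠ 0 := by
    intro h; rw [h, ord_zero] at hx; exact (WithTop.top_ne_coe).elim (by rw [hx])
  obtain ⟨t, htT, htx⟩ := hT x hx0
  refine ⟨t * x, htx, ?_⟩
  have ht0 : t ≠ 0 := by
    intro h; apply hne _ htx; rw [h, zero_mul]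
  obtain ⟨ot, hot⟩ := WithTop.ne_top_iff_exists.1 (ord_ne_top ht0)
  have h1 : (ord t).untopD 0 ≤ C :=
    mem_upperBounds.1 hC _ (Finset.mem_coe.2 (Finset.mem_image_of_mem (fun t => (ord t).untopD 0) htT))
  have hotC : ot ≤ C := by
    rw [← hot, WithTop.untopD_coe] at h1; exact h1
  rw [ord_mul, ← hot, hx, ← WithTop.coe_add, WithTop.coe_le_coe]
  omega

section LC
variable {ι : Type} [Fintype ι]

lemma isLocallyConstant_indicator_pball (c : ι → K) (r : ℤ) :
    IsLocallyConstant ((pball c r).indicator (fun _ => (1:ℂ))) := by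
  rw [IsLocallyConstant.iff_exists_open]
  intro x
  rcases Classical.em (x ∈ pball c r) with h | h
  · refine ⟨pball c r, isOpen_pball c r, h, fun y hy => ?_⟩
    rw [Set.indicator_of_mem hy, Set.indicator_of_mem h]
  · refine ⟨pball x r, isOpen_pball x r, pball_self x r, fun y hy => ?_⟩
    have hy' : y ∉ pball c r := by
      intro hc
      refine h ?_
      rw [← pball_eq_of_mem hc, ← pball_eq_of_mem (mem_pball_symm.1 hy)]
      exact pball_self x r
    rw [Set.indicator_of_notMem hy', Set.indicator_of_notMem h]

/-- locally constant + compactly supported functions are uniformly locally constant. -/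
lemma unif_const {f : (ι → K) → ℂ} (hf : IsLocallyConstant f) (hc : HasCompactSupport f) :
    ∃ r : ℤ, ∀ (x t : ι → K), (r : WithTop ℤ) ≤ ordVec t → f (x + t) = f x := by
  have hcov : ∀ x : ι → K, ∃ r : ℤ, ∀ y ∈ pball x r, f y = f x := by
    intro x
    obtain ⟨U, hU, hxU, hUf⟩ := (IsLocallyConstant.iff_exists_open f).1 hf x
    obtain ⟨r, hr⟩ := exists_pball_subset hU hxU
    exact ⟨r, fun y hy => hUf y (hr hy)⟩
  choose rad hrad using hcov
  obtain ⟨s, hs⟩ := hc.elim_finite_subcover (fun x : ι → K => pball x (rad x))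
    (fun x => isOpen_pball _ _) (fun x _ => Set.mem_iUnion.2 ⟨x, pball_self _ _⟩)
  obtain ⟨R, hR⟩ : ∃ R : ℤ, ∀ c ∈ s, rad c ≤ R := by
    rcases s.eq_empty_or_nonempty with rfl | hne
    · exact ⟨0, by simp⟩
    · exact ⟨s.sup' hne rad, fun c hc => Finset.le_sup' rad hc⟩
  refine ⟨R, ?_⟩
  have main : ∀ x t : ι → K, (R : WithTop ℤ) ≤ ordVec t → x ∈ tsupport f → f (x + t) = f x := by
    intro x t ht hx
    obtain ⟨c, hcs, hxc⟩ := Set.mem_iUnion₂.1 (hs hx)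
    have hxt : x + t ∈ pball c (rad c) := by
      rw [mem_pball'] at hxc ⊢
      have : c - (x + t) = (c - x) + (-t) := by ring
      rw [this]
      refine le_trans (le_min hxc ?_) (min_le_ordVec_add _ _)
      rw [ordVec_neg]
      exact le_trans (by exact_mod_cast WithTop.coe_le_coe.2 (hR c hcs)) ht
    rw [hrad c _ hxt, hrad c _ hxc]
  intro x t ht
  rcases Classical.em (x ∈ tsupport f) with hx | hx
  · exact main x t ht hx
  rcases Classical.em (x + t ∈ tsupport f) with hxt | hxt
  · have := main (x + t) (-t) (by rwa [ordVec_neg]) hxt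
    rw [add_neg_cancel_right] at this
    exact this.symm
  · rw [image_eq_zero_of_notMem_tsupport hx, image_eq_zero_of_notMem_tsupport hxt]

/-- ord of a finite sum. -/
lemma le_ord_sum {s : Finset ι} {f : ι → K} {c : WithTop ℤ} (h : ∀ i ∈ s, c ≤ ord (f i)) :
    c ≤ ord (∑ i ∈ s, f i) := by
  classical
  induction s using Finset.induction_on with
  | empty => simp [ord_zero]
  | @insert a s ha ih =>
    rw [Finset.sum_insert ha]
    refine le_trans (le_min (h a (Finset.mem_insert_self a s)) ?_) (ord_add _ _)
    exact ih fun i hi => h i (Finset.mem_insert_of_mem hi)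

/-- The character integrand is locally constant. -/
lemma isLocallyConstant_char {ψ : AddChar K ℂ}
    (hψ1 : ∀ x : K, (1 : WithTop ℤ) ≤ ord x → ψ x = 1) (η : ι → K) :
    IsLocallyConstant (fun x : ι → K => ψ (∑ i, x i * η i)) := by
  rw [IsLocallyConstant.iff_exists_open]
  intro x
  set r : ℤ := 1 - (ordVec η).untopD 0 with hr
  have hkey : ∀ i, (1 : WithTop ℤ) ≤ (r : WithTop ℤ) + ord (η i) := by
    intro i
    rcases eq_or_ne (ord (η i)) ⊤ with h | h
    · rw [h, add_top]; exact le_top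
    obtain ⟨w, hw⟩ := WithTop.ne_top_iff_exists.1 h
    have hwv : (ordVec η).untopD 0 ≤ w := by
      have h2 := ordVec_le η i
      rw [← hw] at h2
      rcases eq_or_ne (ordVec η) ⊤ with h3 | h3
      · rw [h3] at h2
        exact absurd (top_le_iff.1 h2) (by exact fun hh => (WithTop.coe_ne_top hh))
      obtain ⟨w2, hw2⟩ := WithTop.ne_top_iff_exists.1 h3
      rw [← hw2, WithTop.coe_le_coe] at h2
      rw [← hw2, WithTop.untopD_coe]
      exact h2
    rw [← hw, ← WithTop.coe_add]
    exact_mod_cast (by omega : (1:ℤ) ≤ r + w)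
  refine ⟨pball x r, isOpen_pball x r, pball_self x r, fun x' hx' => ?_⟩
  refine psi_const hψ1 ?_
  have : ∑ i, x' i * η i - ∑ i, x i * η i = ∑ i, (x' i - x i) * η i := by
    rw [← Finset.sum_sub_distrib]
    congr 1; funext i; ring
  rw [this]
  refine le_ord_sum fun i _ => ?_
  rw [ord_mul]
  refine le_trans (hkey i) (add_le_add_left ?_ _)
  rw [mem_pball] at hx'
  rw [← ord_neg, neg_sub]
  exact hx' i

end LC
end Aux

namespace Aux
open NALocalField MeasureTheory

section Meas
variable {ι : Type} [Fintype ι] [Nonempty ι]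

instance (priority := 100) : MeasurableSpace (ι → K) := borel _
instance (priority := 100) : BorelSpace (ι → K) := ⟨rfl⟩

/-- A fixed Haar measure on `K^ι`. -/
def haarK (ι : Type) [Fintype ι] : Measure (ι → K) :=
  Measure.addHaarMeasure
    ⟨⟨pball 0 0, isCompact_pball 0 0⟩, by
      rw [(isOpen_pball (0 : ι → K) 0).interior_eq]
      exact ⟨0, pball_self 0 0⟩⟩

instance : (haarK (K := K) ι).IsAddHaarMeasure :=
  Measure.isAddHaarMeasure_addHaarMeasure _

instance : (haarK (K := K) ι).IsAddRightInvariant := by infer_instance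

lemma haar_pball_pos (c : ι → K) (r : ℤ) : 0 < haarK (K := K) ι (pball c r) :=
  (isOpen_pball c r).measure_pos _ ⟨c, pball_self c r⟩

lemma haar_pball_lt_top (c : ι → K) (r : ℤ) : haarK (K := K) ι (pball c r) < ⊤ :=
  (isCompact_pball c r).measure_lt_top

lemma integral_indicator_pball (c : ι → K) (r : ℤ) :
    ∫ x, (pball c r).indicator (fun _ => (1:ℂ)) x ∂(haarK (K := K) ι) =
      (((haarK (K := K) ι (pball c r)).toReal : ℝ) : ℂ) := by
  rw [MeasureTheory.integral_indicator_const (1:ℂ) (isOpen_pball c r).measurableSet]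
  simp
  rfl

/-- Key orthogonality: an integral of a periodic function against a nontrivial character
vanishes. -/
lemma vanish_integral {ψ : AddChar K ℂ} {h : (ι → K) → ℂ}
    (hint : Integrable h (haarK (K := K) ι)) {t ζ : ι → K}
    (hht : ∀ x, h (x + t) = h x) (hne : ψ (∑ i, t i * ζ i) ≠ 1) :
    ∫ x, h x * ψ (∑ i, x i * ζ i) ∂(haarK (K := K) ι) = 0 := by
  set I := ∫ x, h x * ψ (∑ i, x i * ζ i) ∂(haarK (K := K) ι) with hI
  have key : I = ψ (∑ i, t i * ζ i) * I := by
    conv_lhs => rw [hI, ← MeasureTheory.integral_add_right_eq_self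
      (μ := haarK (K := K) ι) (fun x => h x * ψ (∑ i, x i * ζ i)) t]
    rw [hI, ← MeasureTheory.integral_const_mul]
    congr 1
    funext x
    have h1 : (∑ i, (x + t) i * ζ i) = (∑ i, x i * ζ i) + (∑ i, t i * ζ i) := by
      rw [← Finset.sum_add_distrib]
      congr 1; funext i; simp [Pi.add_apply]; ring
    rw [hht x, h1, AddChar.map_add_eq_mul]
    ring
  have h2 : (1 - ψ (∑ i, t i * ζ i)) * I = 0 := by
    rw [sub_mul, one_mul]
    rw [← key]; ring
  rcases mul_eq_zero.1 h2 with h3 | h3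
  · exact absurd (by linear_combination -h3 : ψ (∑ i, t i * ζ i) = 1) hne
  · exact h3

end Meas
end Aux

namespace Aux
open NALocalField MeasureTheory

section Terms
variable {ι : Type} [Fintype ι] [Nonempty ι]

lemma term_vanish {ψ : AddChar K ℂ} (hψ : IsStandardChar ψ) {h : (ι → K) → ℂ}
    (hint : Integrable h (haarK (K := K) ι)) {R : ℤ}
    (hR : ∀ x t : ι → K, (R : WithTop ℤ) ≤ ordVec t → h (x + t) = h x) {ζ : ι → K}
    (hζ : ordVec ζ ≤ ((-R : ℤ) : WithTop ℤ)) :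
    ∫ x, h x * ψ (∑ i, x i * ζ i) ∂(haarK (K := K) ι) = 0 := by
  obtain ⟨x₀, hx₀, hx₀1⟩ := hψ.2
  obtain ⟨i, hi⟩ := exists_ordVec_eq ζ
  have hζi : ord (ζ i) ≤ ((-R : ℤ) : WithTop ℤ) := hi ▸ hζ
  have hζi0 : ζ i ≠ 0 := by
    intro h0
    rw [h0, ord_zero, top_le_iff] at hζi
    exact WithTop.coe_ne_top hζi
  obtain ⟨w, hw⟩ := WithTop.ne_top_iff_exists.1 (ord_ne_top hζi0)
  have hwR : w ≤ -R := by rw [← hw, WithTop.coe_le_coe] at hζi; exact hζi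
  set t : ι → K := Pi.single i (x₀ * (ζ i)⁻¹) with ht
  have htv : (R : WithTop ℤ) ≤ ordVec t := by
    refine le_ordVec fun j => ?_
    rcases eq_or_ne j i with rfl | hj
    · rw [ht, Pi.single_eq_same, ord_mul, ord_inv hζi0 hw.symm]
      calc (R : WithTop ℤ) ≤ ((-w : ℤ) : WithTop ℤ) := WithTop.coe_le_coe.2 (by omega)
        _ = 0 + ((-w : ℤ) : WithTop ℤ) := (zero_add _).symm
        _ ≤ ord x₀ + ((-w : ℤ) : WithTop ℤ) := add_le_add_left hx₀ _
    · rw [ht, Pi.single_eq_of_ne hj, ord_zero]; exact le_top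
  have hsum : (∑ j, t j * ζ j) = x₀ := by
    rw [Finset.sum_eq_single i]
    · rw [ht, Pi.single_eq_same, inv_mul_cancel_right₀ hζi0]
    · intro j _ hj; rw [ht, Pi.single_eq_of_ne hj, zero_mul]
    · intro h; exact absurd (Finset.mem_univ i) h
  exact vanish_integral hint (fun x => hR x t htv) (by rw [hsum]; exact hx₀1)

lemma sb_continuous {f : (ι → K) → ℂ} (hf : IsLocallyConstant f) : Continuous f :=
  hf.continuous

lemma sb_integrable {f : (ι → K) → ℂ} (hf : IsLocallyConstant f) (hc : HasCompactSupport f) :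
    Integrable f (haarK (K := K) ι) :=
  hf.continuous.integrable_of_hasCompactSupport hc

/-- The full term integrand is Schwartz–Bruhat, hence integrable. -/
lemma term_sb {ψ : AddChar K ℂ} (hψ1 : ∀ x : K, (1 : WithTop ℤ) ≤ ord x → ψ x = 1)
    {f : (ι → K) → ℂ} (hf : IsLocallyConstant f) (hc : HasCompactSupport f)
    (c : ι → K) (r : ℤ) (η : ι → K) :
    IsLocallyConstant (fun x => f x * ((pball c r).indicator (fun _ => (1:ℂ)) x *
        ψ (∑ i, x i * η i))) ∧
    HasCompactSupport (fun x => f x * ((pball c r).indicator (fun _ => (1:ℂ)) x *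
        ψ (∑ i, x i * η i))) := by
  constructor
  · exact hf.mul ((isLocallyConstant_indicator_pball c r).mul (isLocallyConstant_char hψ1 η))
  · exact hc.mul_right

lemma term_norm_le {ψ : AddChar K ℂ} (hψ : IsStandardChar ψ)
    {f : (ι → K) → ℂ} (hf : IsLocallyConstant f) (hc : HasCompactSupport f)
    {C : ℝ} (hC : ∀ x, ‖f x‖ ≤ C) (c : ι → K) (r : ℤ) (η : ι → K) :
    ‖∫ x, f x * ((pball c r).indicator (fun _ => (1:ℂ)) x *
        ψ (∑ i, x i * η i)) ∂(haarK (K := K) ι)‖ ≤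
      C * (haarK (K := K) ι (pball c r)).toReal := by
  have heq : (fun x => f x * ((pball c r).indicator (fun _ => (1:ℂ)) x * ψ (∑ i, x i * η i)))
      = (pball c r).indicator (fun x => f x * ψ (∑ i, x i * η i)) := by
    funext x
    rcases Classical.em (x ∈ pball c r) with h | h
    · rw [Set.indicator_of_mem h, Set.indicator_of_mem h]; ring
    · rw [Set.indicator_of_notMem h, Set.indicator_of_notMem h]; ring
  rw [heq, MeasureTheory.integral_indicator (isOpen_pball c r).measurableSet]
  refine MeasureTheory.norm_setIntegral_le_of_norm_le_const (haar_pball_lt_top c r) ?_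
  · intro x _
    rw [norm_mul, norm_psi hψ, mul_one]
    exact hC x

end Terms
end Aux

namespace Aux
open NALocalField MeasureTheory

lemma coe_untop' {w : WithTop ℤ} (h : w ≠ ⊤) : ((w.untopD 0 : ℤ) : WithTop ℤ) = w := by
  obtain ⟨z, hz⟩ := WithTop.ne_top_iff_exists.1 h
  rw [← hz, WithTop.untopD_coe]

lemma coe_add_one_le {m : ℤ} {w : WithTop ℤ} (h : (m : WithTop ℤ) < w) :
    ((m + 1 : ℤ) : WithTop ℤ) ≤ w := by
  rcases eq_or_ne w ⊤ with rfl | hw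
  · exact le_top
  obtain ⟨z, hz⟩ := WithTop.ne_top_iff_exists.1 hw
  rw [← hz, WithTop.coe_lt_coe] at h
  rw [← hz, WithTop.coe_le_coe]
  omega

section VecMore
variable {ι : Type} [Fintype ι] [Nonempty ι]

lemma ordVec_sub_of_ne {u v : ι → K} (h : ordVec u ≠ ordVec v) :
    ordVec (u - v) = min (ordVec u) (ordVec v) := by
  rcases lt_or_gt_of_ne h with hlt | hlt
  · have : ordVec (u + (-v)) = ordVec u := ordVec_add_eq_left (by rwa [ordVec_neg])
    rw [← sub_eq_add_neg] at this
    rw [this, min_eq_left hlt.le]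
  · have : ordVec (v + (-u)) = ordVec v := ordVec_add_eq_left (by rwa [ordVec_neg])
    rw [← sub_eq_add_neg] at this
    rw [ordVec_sub_rev, this, min_eq_right hlt.le]

lemma mem_pball_add_iff {c x t : ι → K} {r : ℤ} (ht : (r : WithTop ℤ) ≤ ordVec t) :
    x + t ∈ pball c r ↔ x ∈ pball c r := by
  have key : ∀ y s : ι → K, (r : WithTop ℤ) ≤ ordVec s → y + s ∈ pball c r → y ∈ pball c r := by
    intro y s hs hy
    rw [mem_pball'] at hy ⊢
    have : c - y = (c - (y + s)) + s := by ring
    rw [this]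
    exact le_trans (le_min hy hs) (min_le_ordVec_add _ _)
  constructor
  · intro h; exact key x t ht h
  · intro h
    refine key (x + t) (-t) (by rwa [ordVec_neg]) ?_
    rwa [add_neg_cancel_right]

lemma indicator_pball_invariant {c x t : ι → K} {r : ℤ} (ht : (r : WithTop ℤ) ≤ ordVec t) :
    (pball c r).indicator (fun _ => (1:ℂ)) (x + t) =
      (pball c r).indicator (fun _ => (1:ℂ)) x := by
  rcases Classical.em (x ∈ pball c r) with h | h
  · rw [Set.indicator_of_mem h, Set.indicator_of_mem ((mem_pball_add_iff ht).2 h)]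
  · rw [Set.indicator_of_notMem h,
      Set.indicator_of_notMem (fun hc => h ((mem_pball_add_iff ht).1 hc))]

lemma tsupport_indicator_pball (c : ι → K) (r : ℤ) :
    tsupport ((pball c r).indicator (fun _ => (1:ℂ))) ⊆ pball c r := by
  apply closure_minimal ?_ ((isCompact_pball c r).isClosed)
  exact Set.support_indicator_subset

lemma hasCompactSupport_indicator_pball (c : ι → K) (r : ℤ) :
    HasCompactSupport ((pball c r).indicator (fun _ => (1:ℂ))) :=
  IsCompact.of_isClosed_subset (isCompact_pball c r) (isClosed_tsupport _)
    (tsupport_indicator_pball c r)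

end VecMore
end Aux

/-- Recursive choice of scaling elements. -/
def lamSeq {K : Type} [Field K] [TopologicalSpace K] [NALocalField K]
    (L : ℤ → K) (v : ℕ → ℤ) : ℕ → K
  | 0 => L (-(v 0))
  | k + 1 => L (min (-(2*((k:ℤ)+1))) (((NALocalField.ord (lamSeq L v k)).untopD 0 + v k) - 1)
      - v (k+1))


/-- Let `Λ` be an open subgroup of finite index of `(K^×, ×)`, `d ≥ 1`,
and let `S` be a closed subset of `K^d × (K^d ∖ {0})` which is `Λ`-conical in the second
factor. Then there exists a distribution `u ∈ S'(K^d)` with `WF_Λ(u) = S`. -/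
theorem exists_distribution_with_prescribed_waveFront {K : Type} [Field K]
    [TopologicalSpace K] [IsTopologicalRing K] [NALocalField K]
    (ψ : AddChar K ℂ) (hψ : IsStandardChar ψ)
    (Λ : Set K) (hΛ : IsOpenFinIndexSubgroup Λ)
    {d : ℕ} (hd : 1 ≤ d)
    (S : Set ((Fin d → K) × (Fin d → K)))
    (hSne : ∀ p ∈ S, p.2 ≠ (0 : Fin d → K))
    (hSclosed : ∃ F : Set ((Fin d → K) × (Fin d → K)), IsClosed F ∧
        S = F ∩ {p | p.2 ≠ (0 : Fin d → K)})
    (hScone : ∀ p ∈ S, ∀ lam ∈ Λ, (p.1, fun i => lam * p.2 i) ∈ S) :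
    ∃ u : ((Fin d → K) → ℂ) → ℂ,
      IsDistributionOn (Set.univ : Set (Fin d → K)) u ∧
      WFset ψ Λ (Set.univ : Set (Fin d → K)) u = S := by
  classical
  haveI : Nonempty (Fin d) := ⟨⟨0, hd⟩⟩
  obtain ⟨F, hFclosed, hSF⟩ := hSclosed
  rcases Set.eq_empty_or_nonempty S with rfl | hS
  · refine ⟨fun _ => 0, ⟨fun c f _ => by simp, fun f g _ _ => by simp⟩, ?_⟩
    ext p
    simp only [WFset, Set.mem_setOf_eq, Set.mem_empty_iff_false, iff_false]
    rintro ⟨-, hp2, hns⟩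
    exact hns ⟨Set.univ, Set.univ, isOpen_univ, isOpen_univ, trivial, trivial,
      fun φ _ _ => ⟨0, fun lam _ _ ξ _ => by simp [FTrans]⟩⟩
  -- a dense sequence in S hitting every relatively open subset infinitely often
  haveI : Nonempty ↥S := hS.to_subtype
  obtain ⟨p0, hp0⟩ := TopologicalSpace.exists_dense_seq ↥S
  set q : ℕ → (Fin d → K) × (Fin d → K) := fun j => ↑(p0 (Nat.unpair j).1) with hq_def
  have hqS : ∀ j, q j ∈ S := fun j => (p0 _).2
  have hqdense : ∀ (W : Set ((Fin d → K) × (Fin d → K))), IsOpen W → ∀ p ∈ W ∩ S, ∀ n : ℕ,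
      ∃ j, n ≤ j ∧ q j ∈ W := by
    intro W hW p hp n
    have hpre : (Subtype.val ⁻¹' W : Set ↥S).Nonempty := ⟨⟨p, hp.2⟩, hp.1⟩
    obtain ⟨a, ha⟩ := hp0.exists_mem_open (hW.preimage continuous_subtype_val) hpre
    refine ⟨Nat.pair a n, Nat.right_le_pair a n, ?_⟩
    rw [hq_def]
    simpa [Nat.unpair_pair] using ha
  have hξ0 : ∀ j, (q j).2 ≠ 0 := fun j => hSne _ (hqS j)
  set v : ℕ → ℤ := fun j => (ordVec ((q j).2)).untopD 0 with hv_def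
  have hv : ∀ j, ordVec ((q j).2) = ((v j : ℤ) : WithTop ℤ) :=
    fun j => (Aux.coe_untop' (Aux.ordVec_ne_top (hξ0 j))).symm
  -- the scaling sequence
  choose L hL1 hL2 using Aux.exists_small_ord Λ hΛ.ne_zero hΛ.finiteIndex
  set lam : ℕ → K := lamSeq L v with hlam_def
  have hlamΛ : ∀ k, lam k ∈ Λ := by
    intro k
    cases k with
    | zero => exact hL1 _
    | succ n => exact hL1 _
  have hlam0 : ∀ k, lam k ≠ 0 := fun k => hΛ.ne_zero _ (hlamΛ k)
  set oz : ℕ → ℤ := fun k => (NALocalField.ord (lam k)).untopD 0 with hoz_def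
  have hoz : ∀ k, NALocalField.ord (lam k) = ((oz k : ℤ) : WithTop ℤ) :=
    fun k => (Aux.coe_untop' (Aux.ord_ne_top (hlam0 k))).symm
  set M : ℕ → ℤ := fun k => oz k + v k with hM_def
  have hozle : ∀ b, (NALocalField.ord (L b)).untopD 0 ≤ b := by
    intro b
    have := hL2 b
    have hne : L b ≠ 0 := hΛ.ne_zero _ (hL1 b)
    rw [← Aux.coe_untop' (Aux.ord_ne_top hne), WithTop.coe_le_coe] at this
    exact this
  have hMle : ∀ k, M k ≤ -(2*(k:ℤ)) := by
    intro k
    cases k with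
    | zero =>
      have := hozle (-(v 0))
      simp only [hM_def, hoz_def, hlam_def]
      show (NALocalField.ord (lamSeq L v 0)).untopD 0 + v 0 ≤ -(2*((0:ℕ):ℤ))
      rw [show lamSeq L v 0 = L (-(v 0)) from rfl]
      push_cast
      omega
    | succ n =>
      have := hozle (min (-(2*((n:ℤ)+1))) (((NALocalField.ord (lamSeq L v n)).untopD 0 + v n) - 1)
        - v (n+1))
      simp only [hM_def, hoz_def, hlam_def]
      show (NALocalField.ord (lamSeq L v (n+1))).untopD 0 + v (n+1) ≤ -(2*(((n+1):ℕ):ℤ))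
      rw [show lamSeq L v (n+1) = L (min (-(2*((n:ℤ)+1)))
        (((NALocalField.ord (lamSeq L v n)).untopD 0 + v n) - 1) - v (n+1)) from rfl]
      push_cast
      omega
  have hMsucc : ∀ k, M (k+1) < M k := by
    intro k
    have := hozle (min (-(2*((k:ℤ)+1))) (((NALocalField.ord (lamSeq L v k)).untopD 0 + v k) - 1)
      - v (k+1))
    simp only [hM_def, hoz_def, hlam_def]
    show (NALocalField.ord (lamSeq L v (k+1))).untopD 0 + v (k+1) <
      (NALocalField.ord (lamSeq L v k)).untopD 0 + v k
    rw [show lamSeq L v (k+1) = L (min (-(2*((k:ℤ)+1)))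
      (((NALocalField.ord (lamSeq L v k)).untopD 0 + v k) - 1) - v (k+1)) from rfl]
    omega
  have hManti : ∀ {j k : ℕ}, j < k → M k < M j := fun {j k} h =>
    strictAnti_nat_of_succ_lt hMsucc h
  have hMne : ∀ {j k : ℕ}, j ≠ k → M j ≠ M k := by
    intro j k hjk
    rcases lt_or_gt_of_ne hjk with h | h
    · exact (hManti h).ne'
    · exact (hManti h).ne
  -- measure and distribution
  set μ : Measure (Fin d → K) := Aux.haarK (Fin d) with hμ_def
  set B : ℕ → Set (Fin d → K) := fun k => pball ((q k).1) (k : ℤ) with hB_def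
  set nη : ℕ → (Fin d → K) := fun k => fun i => (-(lam k)) * ((q k).2 i) with hnη_def
  set wgt : ℕ → ℂ := fun k => ((((2:ℝ)^k * (μ (B k)).toReal)⁻¹ : ℝ) : ℂ) with hwgt_def
  set T : ℕ → ((Fin d → K) → ℂ) → ℂ := fun k f =>
    wgt k * ∫ x, f x * ((B k).indicator (fun _ => (1:ℂ)) x * ψ (∑ i, x i * nη k i)) ∂μ
    with hT_def
  set u : ((Fin d → K) → ℂ) → ℂ := fun f => ∑' k, T k f with hu_def
  have hμBpos : ∀ k, 0 < (μ (B k)).toReal := by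
    intro k
    exact ENNReal.toReal_pos (Aux.haar_pball_pos _ _).ne' (Aux.haar_pball_lt_top _ _).ne
  have hwgt0 : ∀ k, wgt k ≠ 0 := by
    intro k
    have := hμBpos k
    rw [hwgt_def]
    simp only [ne_eq, Complex.ofReal_eq_zero, inv_eq_zero]
    positivity
  -- integrability of the term integrands
  have hterm_int : ∀ (k : ℕ) (f : (Fin d → K) → ℂ), IsLocallyConstant f → HasCompactSupport f →
      MeasureTheory.Integrable
        (fun x => f x * ((B k).indicator (fun _ => (1:ℂ)) x * ψ (∑ i, x i * nη k i))) μ := by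
    intro k f hf hc
    obtain ⟨hlc, hcs⟩ := Aux.term_sb (ψ := ψ) hψ.1 hf hc ((q k).1) (k : ℤ) (nη k)
    exact Aux.sb_integrable hlc hcs
  have hsummable : ∀ (f : (Fin d → K) → ℂ), IsLocallyConstant f → HasCompactSupport f →
      Summable (fun k => T k f) := by
    intro f hf hc
    obtain ⟨C, hC⟩ := hc.exists_bound_of_continuous hf.continuous
    have hC0 : 0 ≤ max C 0 := le_max_right _ _
    refine Summable.of_norm_bounded (g := fun k => max C 0 * ((1:ℝ)/2)^k)
      ((summable_geometric_of_lt_one (by norm_num) (by norm_num)).mul_left _) ?_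
    intro k
    rw [hT_def]
    simp only [norm_mul]
    have h1 : ‖wgt k‖ = ((2:ℝ)^k * (μ (B k)).toReal)⁻¹ := by
      rw [hwgt_def, Complex.norm_real]
      exact abs_of_nonneg (by positivity)
    have h2 := Aux.term_norm_le (ψ := ψ) hψ hf hc
      (C := max C 0) (fun x => le_trans (hC x) (le_max_left _ _)) ((q k).1) (k : ℤ) (nη k)
    calc ‖wgt k‖ * ‖∫ x, f x * ((B k).indicator (fun _ => (1:ℂ)) x *
          ψ (∑ i, x i * nη k i)) ∂μ‖
        ≤ ((2:ℝ)^k * (μ (B k)).toReal)⁻¹ * (max C 0 * (μ (B k)).toReal) := by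
          rw [h1]
          refine mul_le_mul_of_nonneg_left h2 (by positivity)
      _ = max C 0 * ((1:ℝ)/2)^k := by
          have := (hμBpos k).ne'
          field_simp
          rw [mul_comm ((2:ℝ)^k) _, mul_assoc, ← mul_pow]; norm_num
  set η : ℕ → (Fin d → K) := fun k => fun i => lam k * ((q k).2 i) with hη_def
  have hηord : ∀ k, ordVec (η k) = ((M k : ℤ) : WithTop ℤ) := by
    intro k
    rw [hη_def]
    rw [Aux.ordVec_smul (hlam0 k) (hoz k) ((q k).2)]
    rw [hv k, ← WithTop.coe_add]
  -- evaluation of a term of `FTrans`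
  have hterm_eval : ∀ (k : ℕ) (φ : (Fin d → K) → ℂ) (ηg : Fin d → K),
      T k (fun x => φ x * ψ (∑ i, x i * ηg i)) =
        wgt k * ∫ x, (φ x * (B k).indicator (fun _ => (1:ℂ)) x) *
          ψ (∑ i, x i * (ηg i + nη k i)) ∂μ := by
    intro k φ ηg
    simp only [hT_def]
    congr 1
    congr 1
    funext x
    have hsum : (∑ i, x i * (ηg i + nη k i)) = (∑ i, x i * ηg i) + (∑ i, x i * nη k i) := by
      rw [← Finset.sum_add_distrib]
      congr 1; funext i; ring
    rw [hsum, AddChar.map_add_eq_mul]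
    ring
  -- vanishing criterion for a term of `FTrans`
  have hterm_zero : ∀ (k : ℕ) (φ : (Fin d → K) → ℂ), IsLocallyConstant φ →
      HasCompactSupport φ → ∀ (Rφ : ℤ),
      (∀ x t : Fin d → K, (Rφ : WithTop ℤ) ≤ ordVec t → φ (x + t) = φ x) →
      ∀ ηg : Fin d → K,
      ordVec (fun i => ηg i + nη k i) ≤ ((-(max Rφ (k:ℤ)) : ℤ) : WithTop ℤ) →
      T k (fun x => φ x * ψ (∑ i, x i * ηg i)) = 0 := by
    intro k φ hφlc hφcs Rφ hRφ ηg hζ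
    rw [hterm_eval k φ ηg]
    have hmul0 : ∫ x, (φ x * (B k).indicator (fun _ => (1:ℂ)) x) *
        ψ (∑ i, x i * (ηg i + nη k i)) ∂μ = 0 := by
      refine Aux.term_vanish hψ ?_ (R := max Rφ (k:ℤ)) ?_ hζ
      · exact Aux.sb_integrable (hφlc.mul (Aux.isLocallyConstant_indicator_pball _ _))
          hφcs.mul_right
      · intro x t ht
        have h1 : φ (x + t) = φ x := hRφ x t (le_trans
          (WithTop.coe_le_coe.2 (le_max_left _ _)) ht)
        have h2 := Aux.indicator_pball_invariant (c := (q k).1) (x := x) (t := t) (r := (k:ℤ))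
          (le_trans (WithTop.coe_le_coe.2 (le_max_right _ _)) ht)
        rw [h1, h2]
    rw [hmul0, mul_zero]
  have hdistrib : IsDistributionOn (Set.univ : Set (Fin d → K)) u := by
    constructor
    · intro c f hf
      simp only [hu_def]
      have hk : ∀ k, T k (c • f) = c * T k f := by
        intro k
        simp only [hT_def]
        have heq : (fun x => (c • f) x *
              ((B k).indicator (fun _ => (1:ℂ)) x * ψ (∑ i, x i * nη k i)))
            = fun x => c * (f x *
              ((B k).indicator (fun _ => (1:ℂ)) x * ψ (∑ i, x i * nη k i))) := by
          funext x
          simp only [Pi.smul_apply, smul_eq_mul]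
          ring
        rw [heq, MeasureTheory.integral_const_mul]
        ring
      rw [show (∑' k, T k (c • f)) = ∑' k, c * T k f from tsum_congr hk, tsum_mul_left]
    · intro f g hf hg
      simp only [hu_def]
      have hk : ∀ k, T k (f + g) = T k f + T k g := by
        intro k
        simp only [hT_def]
        have heq : (fun x => (f + g) x *
              ((B k).indicator (fun _ => (1:ℂ)) x * ψ (∑ i, x i * nη k i)))
            = (fun x => f x * ((B k).indicator (fun _ => (1:ℂ)) x * ψ (∑ i, x i * nη k i)))
              + fun x => g x * ((B k).indicator (fun _ => (1:ℂ)) x * ψ (∑ i, x i * nη k i)) := by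
          funext x
          simp only [Pi.add_apply]
          ring
        rw [heq, MeasureTheory.integral_add' (hterm_int k f hf.1 hf.2.1)
          (hterm_int k g hg.1 hg.2.1)]
        ring
      rw [show (∑' k, T k (f + g)) = ∑' k, (T k f + T k g) from tsum_congr hk,
        Summable.tsum_add (hsummable f hf.1 hf.2.1) (hsummable g hg.1 hg.2.1)]
  refine ⟨u, hdistrib, ?_⟩
  apply Set.eq_of_subset_of_subset
  · -- WFset ⊆ S
    rintro p ⟨-, hp2, hns⟩
    by_contra hpS
    apply hns
    have hpF : p ∉ F := fun h => hpS (by rw [hSF]; exact ⟨h, hp2⟩)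
    obtain ⟨r₀, hr₀⟩ := Aux.exists_pball_prod_subset (W := Fᶜ) hFclosed.isOpen_compl hpF
    set v₀ : ℤ := (ordVec p.2).untopD 0 with hv₀_def
    have hv₀ : ordVec p.2 = ((v₀ : ℤ) : WithTop ℤ) :=
      (Aux.coe_untop' (Aux.ordVec_ne_top hp2)).symm
    set rV : ℤ := max r₀ (v₀ + 1) with hrV_def
    have hordeq : ∀ ξ : Fin d → K, ξ ∈ pball p.2 rV → ordVec ξ = ((v₀ : ℤ) : WithTop ℤ) := by
      intro ξ hξ
      have hdiff : ((rV : ℤ) : WithTop ℤ) ≤ ordVec (ξ - p.2) := by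
        rw [Aux.ordVec_sub_rev]; exact hξ
      have h2 : ordVec (p.2 + (ξ - p.2)) = ordVec p.2 := by
        refine Aux.ordVec_add_eq_left ?_
        rw [hv₀]
        exact lt_of_lt_of_le (WithTop.coe_lt_coe.2 (by omega)) hdiff
      rw [add_sub_cancel] at h2
      rw [h2, hv₀]
    refine ⟨pball p.1 r₀, pball p.2 rV, Aux.isOpen_pball _ _, Aux.isOpen_pball _ _,
      Aux.pball_self _ _, Aux.pball_self _ _, ?_⟩
    intro φ hφ hφsupp
    obtain ⟨Rφ, hRφ⟩ := Aux.unif_const hφ.1 hφ.2.1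
    set K₀ : ℕ := (max r₀ (rV - v₀)).toNat + 1 with hK₀_def
    have hK₀Z : max r₀ (rV - v₀) < (K₀ : ℤ) := by
      rw [hK₀_def]
      push_cast
      have := Int.self_le_toNat (max r₀ (rV - v₀))
      omega
    set N : ℤ := min (M (K₀ - 1) - v₀) (min (-Rφ - v₀) (-Rφ - rV)) with hN_def
    refine ⟨N, ?_⟩
    intro lam' hlam' hlt' ξ hξ
    have hlam'0 : lam' ≠ 0 := hΛ.ne_zero _ hlam'
    set olam' : ℤ := (NALocalField.ord lam').untopD 0 with holam'_def
    have holam' : NALocalField.ord lam' = ((olam' : ℤ) : WithTop ℤ) :=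
      (Aux.coe_untop' (Aux.ord_ne_top hlam'0)).symm
    have holam'N : olam' < N := by
      rw [holam'] at hlt'
      exact_mod_cast hlt'
    have hordξ : ordVec ξ = ((v₀ : ℤ) : WithTop ℤ) := hordeq ξ hξ
    have hηg : ordVec (fun i => lam' * ξ i) = (((olam' + v₀ : ℤ)) : WithTop ℤ) := by
      rw [Aux.ordVec_smul hlam'0 holam' ξ, hordξ, ← WithTop.coe_add]
    have hFT : FTrans ψ u φ (fun i => lam' * ξ i) =
        ∑' k, T k (fun x => φ x * ψ (∑ i, x i * (lam' * ξ i))) := rfl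
    rw [hFT]
    have hall : ∀ k, T k (fun x => φ x * ψ (∑ i, x i * (lam' * ξ i))) = 0 := by
      intro k
      have hfun : (fun i => (lam' * ξ i) + nη k i) = (fun i => lam' * ξ i) - η k := by
        funext i
        simp only [hη_def, hnη_def, Pi.sub_apply]
        ring
      by_cases hcase : olam' + v₀ = M k
      · -- resonant case: either the support misses the ball, or we contradict closedness
        by_cases hsupp : ∀ x, φ x * (B k).indicator (fun _ => (1:ℂ)) x = 0
        · rw [hterm_eval k φ _]
          have hzero2 : (fun x => (φ x * (B k).indicator (fun _ => (1:ℂ)) x) *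
              ψ (∑ i, x i * ((lam' * ξ i) + nη k i))) = fun _ => (0:ℂ) := by
            funext x
            rw [hsupp x, zero_mul]
          rw [hzero2, MeasureTheory.integral_zero, mul_zero]
        · push_neg at hsupp
          obtain ⟨x', hx'⟩ := hsupp
          have hφx' : φ x' ≠ 0 := left_ne_zero_of_mul hx'
          have hx'B : x' ∈ B k := by
            by_contra hc
            rw [Set.indicator_of_notMem hc, mul_zero] at hx'
            exact hx' rfl
          have hkK₀ : K₀ ≤ k := by
            by_contra hc
            push_neg at hc
            have hle : k ≤ K₀ - 1 := by omega
            have h2 : M (K₀ - 1) ≤ M k := by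
              rcases eq_or_lt_of_le hle with h3 | h3
              · rw [h3]
              · exact (hManti h3).le
            have h4 : N ≤ M (K₀ - 1) - v₀ := min_le_left _ _
            omega
          refine hterm_zero k φ hφ.1 hφ.2.1 Rφ hRφ _ ?_
          by_contra hord2
          push_neg at hord2
          have hord3 : (((1 - max Rφ (k:ℤ) : ℤ)) : WithTop ℤ) ≤
              ordVec (fun i => (lam' * ξ i) + nη k i) := by
            have := Aux.coe_add_one_le hord2
            convert this using 2
            omega
          -- geometric contradiction with the closed set F
          exfalso
          have hx'U : x' ∈ pball p.1 r₀ := hφsupp (subset_tsupport φ hφx')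
          have hxk : (q k).1 ∈ pball p.1 r₀ := by
            rw [Aux.mem_pball'] at hx'U ⊢
            have heq2 : p.1 - (q k).1 = (p.1 - x') + (x' - (q k).1) := by ring
            rw [heq2]
            refine le_trans (le_min hx'U ?_) (Aux.min_le_ordVec_add _ _)
            rw [Aux.ordVec_sub_rev]
            refine le_trans ?_ hx'B
            exact WithTop.coe_le_coe.2 (by omega)
          set μ' : K := lam k * lam'⁻¹ with hμ'_def
          have hμ'Λ : μ' ∈ Λ := hΛ.mul_mem _ (hlamΛ k) _ (hΛ.inv_mem _ hlam')
          have hSk := hScone (q k) (hqS k) μ' hμ'Λ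
          have hSkF : ((q k).1, fun i => μ' * (q k).2 i) ∈ F := by
            rw [hSF] at hSk
            exact hSk.1
          have hξdiff : (fun i => ξ i - μ' * ((q k).2 i)) =
              fun i => lam'⁻¹ * ((lam' * ξ i) + nη k i) := by
            funext i
            simp only [hμ'_def, hnη_def]
            field_simp
            ring
          have hordinv : NALocalField.ord lam'⁻¹ = (((-olam' : ℤ)) : WithTop ℤ) :=
            Aux.ord_inv hlam'0 holam'
          have hordξdiff : ((rV : ℤ) : WithTop ℤ) ≤
              ordVec (fun i => ξ i - μ' * ((q k).2 i)) := by
            rw [hξdiff, Aux.ordVec_smul (inv_ne_zero hlam'0) hordinv]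
            have h5 : N ≤ -Rφ - rV := le_trans (min_le_right _ _) (min_le_right _ _)
            have h6 : N ≤ -Rφ - v₀ := le_trans (min_le_right _ _) (min_le_left _ _)
            have h7 : M k ≤ -(2*(k:ℤ)) := hMle k
            have h8 : rV - v₀ < (k:ℤ) := by
              have := hK₀Z
              have : (K₀ : ℤ) ≤ (k : ℤ) := by exact_mod_cast hkK₀
              omega
            calc ((rV : ℤ) : WithTop ℤ)
                ≤ (((-olam' : ℤ)) : WithTop ℤ) + (((1 - max Rφ (k:ℤ) : ℤ)) : WithTop ℤ) := by
                  rw [← WithTop.coe_add, WithTop.coe_le_coe]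
                  omega
              _ ≤ (((-olam' : ℤ)) : WithTop ℤ) +
                  ordVec (fun i => (lam' * ξ i) + nη k i) := add_le_add_right hord3 _
          have hξmem : (fun i => μ' * ((q k).2 i)) ∈ pball p.2 r₀ := by
            rw [Aux.mem_pball']
            have heq3 : p.2 - (fun i => μ' * ((q k).2 i)) =
                (p.2 - ξ) + fun i => (ξ i - μ' * ((q k).2 i)) := by
              funext i
              simp only [Pi.sub_apply, Pi.add_apply]
              ring
            rw [heq3]
            have hp2ξ : ((rV : ℤ) : WithTop ℤ) ≤ ordVec (p.2 - ξ) := hξ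
            refine le_trans ?_ (le_trans (le_min hp2ξ hordξdiff) (Aux.min_le_ordVec_add _ _))
            exact WithTop.coe_le_coe.2 (by omega)
          exact (hr₀ (Set.mk_mem_prod hxk hξmem)) hSkF
      · -- non-resonant case: valuations differ, the term vanishes
        refine hterm_zero k φ hφ.1 hφ.2.1 Rφ hRφ _ ?_
        rw [hfun, Aux.ordVec_sub_of_ne (by
          rw [hηg, hηord k]
          exact_mod_cast hcase)]
        rw [hηg, hηord k, ← WithTop.coe_min, WithTop.coe_le_coe]
        have h7 : M k ≤ -(2*(k:ℤ)) := hMle k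
        have h6 : N ≤ -Rφ - v₀ := le_trans (min_le_right _ _) (min_le_left _ _)
        omega
    exact (tsum_congr hall).trans tsum_zero
  · -- S ⊆ WFset
    intro p hp
    refine ⟨trivial, hSne _ hp, ?_⟩
    rintro ⟨U₀, V₀, hU₀, hV₀, hxU, hξV, hsm⟩
    obtain ⟨r, hr⟩ := Aux.exists_pball_subset hU₀ hxU
    obtain ⟨rv, hrv⟩ := Aux.exists_pball_subset hV₀ hξV
    have hp2 : p.2 ≠ 0 := hSne _ hp
    set v₀ : ℤ := (ordVec p.2).untopD 0 with hv₀_def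
    have hv₀ : ordVec p.2 = ((v₀ : ℤ) : WithTop ℤ) :=
      (Aux.coe_untop' (Aux.ordVec_ne_top hp2)).symm
    set rv' : ℤ := max rv (v₀ + 1) with hrv'_def
    have hordeq : ∀ ξ : Fin d → K, ξ ∈ pball p.2 rv' → ordVec ξ = ((v₀ : ℤ) : WithTop ℤ) := by
      intro ξ hξ
      have hdiff : ((rv' : ℤ) : WithTop ℤ) ≤ ordVec (ξ - p.2) := by
        rw [Aux.ordVec_sub_rev]; exact hξ
      have : ordVec (p.2 + (ξ - p.2)) = ordVec p.2 := by
        refine Aux.ordVec_add_eq_left ?_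
        rw [hv₀]
        refine lt_of_lt_of_le ?_ hdiff
        exact WithTop.coe_lt_coe.2 (by omega)
      rw [add_sub_cancel] at this
      rw [this, hv₀]
    set φ := (pball p.1 r).indicator (fun _ => (1:ℂ)) with hφ_def
    have hφlc := Aux.isLocallyConstant_indicator_pball (K := K) p.1 r
    have hφcs := Aux.hasCompactSupport_indicator_pball (K := K) p.1 r
    have hφsupp : tsupport φ ⊆ U₀ := (Aux.tsupport_indicator_pball p.1 r).trans hr
    obtain ⟨N, hN⟩ := hsm φ ⟨hφlc, hφcs, Set.subset_univ _⟩ hφsupp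
    have hWopen : IsOpen (pball p.1 r ×ˢ pball p.2 rv') :=
      (Aux.isOpen_pball _ _).prod (Aux.isOpen_pball _ _)
    obtain ⟨j, hjge, hjW⟩ := hqdense _ hWopen p
      ⟨⟨Aux.pball_self _ _, Aux.pball_self _ _⟩, hp⟩ (max r (1 - N - v₀)).toNat
    have hjZ : max r (1 - N - v₀) ≤ (j : ℤ) :=
      le_trans (Int.self_le_toNat _) (by exact_mod_cast hjge)
    obtain ⟨hjx, hjξ⟩ := hjW
    have hvj : v j = v₀ := by
      have h1 := hordeq _ hjξ
      rw [hv j] at h1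
      exact_mod_cast h1
    -- apply the smoothness statement to `lam j` and `ξ_j`
    have hltN : NALocalField.ord (lam j) < ((N : ℤ) : WithTop ℤ) := by
      rw [hoz j]
      refine WithTop.coe_lt_coe.2 ?_
      have h1 : oz j + v j = M j := rfl
      have h2 := hMle j
      omega
    have hξV₀ : (q j).2 ∈ V₀ := hrv (Aux.pball_mono _ (le_max_left _ _) hjξ)
    have hzero := hN (lam j) (hlamΛ j) hltN ((q j).2) hξV₀
    -- but the `j`-th term is the only nonzero one and it is nonzero
    have hFT : FTrans ψ u φ (fun i => lam j * (q j).2 i) =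
        ∑' k, T k (fun x => φ x * ψ (∑ i, x i * (lam j * (q j).2 i))) := rfl
    have hothers : ∀ k, k ≠ j →
        T k (fun x => φ x * ψ (∑ i, x i * (lam j * (q j).2 i))) = 0 := by
      intro k hkj
      refine hterm_zero k φ hφlc hφcs r
        (fun x t ht => Aux.indicator_pball_invariant ht) _ ?_
      have hfun : (fun i => (lam j * (q j).2 i) + nη k i) = η j - η k := by
        funext i
        simp only [hη_def, hnη_def, Pi.sub_apply]
        ring
      rw [hfun, Aux.ordVec_sub_of_ne (by rw [hηord j, hηord k]; exact_mod_cast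
        (hMne (fun h => hkj h.symm)))]
      rw [hηord j, hηord k]
      have hMj : M j ≤ -r := by
        have := hMle j
        omega
      have hMk : M k ≤ -(k:ℤ) := by
        have := hMle k
        omega
      rw [← WithTop.coe_min, WithTop.coe_le_coe]
      omega
    have hjterm : T j (fun x => φ x * ψ (∑ i, x i * (lam j * (q j).2 i))) =
        wgt j * (((μ (B j)).toReal : ℝ) : ℂ) := by
      rw [hterm_eval j φ _]
      congr 1
      have hint_eq : (fun x : Fin d → K => (φ x * (B j).indicator (fun _ => (1:ℂ)) x) *
          ψ (∑ i, x i * ((lam j * (q j).2 i) + nη j i)))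
          = (B j).indicator (fun _ => (1:ℂ)) := by
        funext x
        have hxsum : (∑ i, x i * ((lam j * (q j).2 i) + nη j i)) = (0:K) :=
          Finset.sum_eq_zero fun i _ => by simp only [hnη_def]; ring
        rw [hxsum, AddChar.map_zero_eq_one, mul_one]
        rcases Classical.em (x ∈ B j) with h | h
        · have hBsub : (B j) ⊆ pball p.1 r := by
            intro y hy
            rw [Aux.mem_pball'] at hy hjx ⊢
            have : p.1 - y = (p.1 - (q j).1) + ((q j).1 - y) := by ring
            rw [this]
            refine le_trans (le_min hjx ?_) (Aux.min_le_ordVec_add _ _)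
            refine le_trans ?_ hy
            exact WithTop.coe_le_coe.2 (by omega)
          have hφx : φ x = 1 := by
            rw [hφ_def, Set.indicator_of_mem (hBsub h)]
          rw [Set.indicator_of_mem h, hφx]
          ring
        · rw [Set.indicator_of_notMem h]
          ring
      rw [hint_eq]
      exact Aux.integral_indicator_pball _ _
    have hsum_eq : FTrans ψ u φ (fun i => lam j * (q j).2 i) =
        wgt j * (((μ (B j)).toReal : ℝ) : ℂ) := by
      rw [hFT, tsum_eq_single j hothers, hjterm]
    rw [hzero] at hsum_eq
    have : wgt j * (((μ (B j)).toReal : ℝ) : ℂ) ≠ 0 := by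
      refine mul_ne_zero (hwgt0 j) ?_
      exact_mod_cast (hμBpos j).ne'
    exact this hsum_eq.symm
end
end

section
/- Let X₁ ⊂ K^{n₁} and X₂ ⊂ K^{n₂} be open sets, and let u₁ ∈ S'(X₁), u₂ ∈ S'(X₂). Then WF_Λ(u₁ ⊗ u₂) ⊆ WF⁰_Λ(u₁) × WF⁰_Λ(u₂), where for a distribution v on X, WF⁰_Λ(v) = WF_Λ(v) ∪ (X × {0}). -/
open MeasureTheory Filter Topology
open scoped BigOperators Classical
set_option linter.unusedSectionVars false
set_option linter.unusedVariables false

noncomputable section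

variable {K : Type} [Field K] [TopologicalSpace K] [IsTopologicalRing K] [NALocalField K]

section Product
variable (ψ : AddChar K ℂ) {n₁ n₂ : ℕ}

/-- `F(φw)(ξ₁,ξ₂) = w((x₁,x₂) ↦ φ(x₁,x₂) ψ(x₁·ξ₁ + x₂·ξ₂))` on `K^{n₁} × K^{n₂}`. -/
def FTrans2 (w : (((Fin n₁ → K) × (Fin n₂ → K)) → ℂ) → ℂ)
    (φ : ((Fin n₁ → K) × (Fin n₂ → K)) → ℂ) (ξ : (Fin n₁ → K) × (Fin n₂ → K)) : ℂ :=
  w fun x => φ x * ψ ((∑ i, x.1 i * ξ.1 i) + ∑ j, x.2 j * ξ.2 j)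

/-- `Λ`-microlocal smoothness on an open subset of `K^{n₁} × K^{n₂}`. -/
def LamSmoothAt2 (Λ : Set K) (U : Set ((Fin n₁ → K) × (Fin n₂ → K)))
    (w : (((Fin n₁ → K) × (Fin n₂ → K)) → ℂ) → ℂ)
    (x₀ ξ₀ : (Fin n₁ → K) × (Fin n₂ → K)) : Prop :=
  ∃ U₀ V₀ : Set ((Fin n₁ → K) × (Fin n₂ → K)), IsOpen U₀ ∧ IsOpen V₀ ∧ x₀ ∈ U₀ ∧ ξ₀ ∈ V₀ ∧
    ∀ φ : ((Fin n₁ → K) × (Fin n₂ → K)) → ℂ, IsSBOn U φ → tsupport φ ⊆ U₀ →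
      ∃ N : ℤ, ∀ lam ∈ Λ, NALocalField.ord lam < (N : WithTop ℤ) →
        ∀ ξ ∈ V₀, FTrans2 ψ w φ ((fun i => lam * ξ.1 i), fun j => lam * ξ.2 j) = 0

/-- The `Λ`-wave front set of a distribution on an open `U ⊆ K^{n₁} × K^{n₂}`. -/
def WFset2 (Λ : Set K) (U : Set ((Fin n₁ → K) × (Fin n₂ → K)))
    (w : (((Fin n₁ → K) × (Fin n₂ → K)) → ℂ) → ℂ) :
    Set (((Fin n₁ → K) × (Fin n₂ → K)) × ((Fin n₁ → K) × (Fin n₂ → K))) :=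
  {p | p.1 ∈ U ∧ p.2 ≠ 0 ∧ ¬ LamSmoothAt2 ψ Λ U w p.1 p.2}

end Product

section AuxHelpers

open NALocalField

variable {K : Type} [Field K] [TopologicalSpace K] [IsTopologicalRing K] [NALocalField K]

lemma aux_ord_zero : ord (0 : K) = ⊤ := (ord_eq_top_iff 0).2 rfl

lemma aux_ord_one : ord (1 : K) = 0 := by
  have h := ord_mul (1 : K) 1
  rw [one_mul] at h
  have h1 : ord (1 : K) ≠ ⊤ := fun ht => one_ne_zero ((ord_eq_top_iff (1 : K)).1 ht)
  lift ord (1 : K) to ℤ using h1 with a ha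
  have h2 : (a : ℤ) = a + a := by exact_mod_cast h
  have h3 : a = 0 := by omega
  simp [h3]

lemma aux_ord_neg (x : K) : ord (-x) = ord x := by
  have hm : ord (-1 : K) = 0 := by
    have h := ord_mul (-1 : K) (-1)
    rw [neg_mul_neg, one_mul, aux_ord_one] at h
    have h1 : ord (-1 : K) ≠ ⊤ := fun ht => by
      have := (ord_eq_top_iff (-1 : K)).1 ht
      norm_num at this
    lift ord (-1 : K) to ℤ using h1 with a ha
    have h2 : (a : ℤ) + a = 0 := by exact_mod_cast h.symm
    have h3 : a = 0 := by omega
    simp [h3]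
  rw [← neg_one_mul, ord_mul, hm, zero_add]

lemma aux_le_ordVec_iff {ι : Type} [Fintype ι] {v : ι → K} {a : WithTop ℤ} :
    a ≤ ordVec v ↔ ∀ i, a ≤ ord (v i) := by
  simp [ordVec, Finset.le_inf_iff]

lemma mem_pball_iff {ι : Type} [Fintype ι] {x y : ι → K} {r : ℤ} :
    y ∈ pball x r ↔ ∀ i, (r : WithTop ℤ) ≤ ord (x i - y i) := by
  simp only [pball, Set.mem_setOf_eq, aux_le_ordVec_iff, Pi.sub_apply]

lemma mem_pball_self {ι : Type} [Fintype ι] (x : ι → K) (r : ℤ) : x ∈ pball x r := by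
  rw [mem_pball_iff]
  intro i
  simp [sub_self, aux_ord_zero]

lemma pball_symm {ι : Type} [Fintype ι] {x y : ι → K} {r : ℤ} (h : y ∈ pball x r) :
    x ∈ pball y r := by
  rw [mem_pball_iff] at h ⊢
  intro i
  have := h i
  rwa [← aux_ord_neg, neg_sub] at this

lemma pball_trans {ι : Type} [Fintype ι] {c x y : ι → K} {r : ℤ}
    (h1 : x ∈ pball c r) (h2 : y ∈ pball x r) : y ∈ pball c r := by
  rw [mem_pball_iff] at h1 h2 ⊢
  intro i
  have : c i - y i = (c i - x i) + (x i - y i) := by ring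
  rw [this]
  exact le_trans (le_min (h1 i) (h2 i)) (ord_add _ _)

lemma pball_mono {ι : Type} [Fintype ι] (x : ι → K) {r m : ℤ} (h : r ≤ m) :
    pball x m ⊆ pball x r := by
  intro y hy
  rw [mem_pball_iff] at hy ⊢
  intro i
  exact le_trans (by exact_mod_cast h) (hy i)

lemma mem_pball_congr {ι : Type} [Fintype ι] {c x y : ι → K} {m : ℤ}
    (h : y ∈ pball x m) : (y ∈ pball c m ↔ x ∈ pball c m) :=
  ⟨fun hy => pball_trans hy (pball_symm h), fun hx => pball_trans hx h⟩

lemma isOpen_pball {ι : Type} [Fintype ι] (x : ι → K) (r : ℤ) : IsOpen (pball x r) := by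
  have heq : pball x r =
      ⋂ i, (fun y : ι → K => x i - y i) ⁻¹' {z : K | (r : WithTop ℤ) ≤ ord z} := by
    ext y
    simp [mem_pball_iff]
  rw [heq]
  exact isOpen_iInter_of_finite fun i =>
    (NALocalField.isOpen_ball r).preimage (continuous_const.sub (continuous_apply i))

lemma isCompact_pball {ι : Type} [Fintype ι] (x : ι → K) (r : ℤ) :
    IsCompact (pball x r) := by
  have heq : pball x r = Set.univ.pi
      (fun i => (fun z : K => x i - z) '' {z : K | (r : WithTop ℤ) ≤ ord z}) := by
    ext y
    simp only [Set.mem_pi, Set.mem_univ, forall_true_left, mem_pball_iff, Set.mem_image,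
      Set.mem_setOf_eq]
    constructor
    · intro h i
      exact ⟨x i - y i, h i, by ring⟩
    · intro h i
      obtain ⟨z, hz, hzy⟩ := h i
      have : x i - y i = z := by rw [← hzy]; ring
      rwa [this]
  rw [heq]
  exact isCompact_univ_pi fun i =>
    (NALocalField.isCompact_ball r).image (continuous_const.sub continuous_id)

lemma isClosed_pball {ι : Type} [Fintype ι] (x : ι → K) (r : ℤ) :
    IsClosed (pball x r) := by
  rw [← isOpen_compl_iff]
  have heq : (pball x r)ᶜ = ⋃ y ∈ (pball x r)ᶜ, pball y r := by
    ext z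
    constructor
    · intro hz
      exact Set.mem_biUnion hz (mem_pball_self _ _)
    · intro hz
      simp only [Set.mem_iUnion, exists_prop] at hz
      obtain ⟨y, hy, hzy⟩ := hz
      intro hzx
      exact hy (pball_trans hzx (pball_symm hzy))
  rw [heq]
  exact isOpen_biUnion fun y _ => isOpen_pball y r

lemma exists_pball_subset {ι : Type} [Fintype ι] {x : ι → K} {W : Set (ι → K)}
    (hW : IsOpen W) (hx : x ∈ W) : ∃ r : ℤ, pball x r ⊆ W := by
  obtain ⟨I, u, hu, hIu⟩ := isOpen_pi_iff.1 hW x hx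
  have h1 : ∀ i : ι, ∃ r : ℤ, i ∈ I → {y : K | (r : WithTop ℤ) ≤ ord (y - x i)} ⊆ u i := by
    intro i
    by_cases hi : i ∈ I
    · have hmem : u i ∈ nhds (x i) := (hu i hi).1.mem_nhds (hu i hi).2
      obtain ⟨r, -, hr⟩ := (NALocalField.nhds_basis (x i)).mem_iff.1 hmem
      exact ⟨r, fun _ => hr⟩
    · exact ⟨0, fun h => absurd h hi⟩
  choose rad hrad using h1
  obtain ⟨M, hM⟩ := Finset.exists_le (I.image rad)
  refine ⟨M, fun y hy => hIu ?_⟩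
  intro i hi
  have hle : rad i ≤ M := hM _ (Finset.mem_image_of_mem _ hi)
  refine hrad i hi ?_
  have := mem_pball_iff.1 hy i
  rw [← aux_ord_neg, neg_sub] at this
  exact le_trans (by exact_mod_cast hle) this

lemma exists_int_le_ord {ι : Type} [Fintype ι] (ξ : ι → K) :
    ∃ d : ℤ, ∀ i, (d : WithTop ℤ) ≤ ord (ξ i) := by
  have h1 : ∀ i, ∃ d : ℤ, (d : WithTop ℤ) ≤ ord (ξ i) := by
    intro i
    cases h : ord (ξ i) with
    | top => exact ⟨0, by simp [h]⟩
    | coe a => exact ⟨a, by simp [h]⟩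
  choose d hd using h1
  obtain ⟨M, hM⟩ := Finset.exists_le (Finset.univ.image fun i => -d i)
  refine ⟨-M, fun i => le_trans ?_ (hd i)⟩
  have : -d i ≤ M := hM _ (Finset.mem_image_of_mem _ (Finset.mem_univ i))
  exact_mod_cast (by omega : -M ≤ d i)

lemma aux_le_ord_sum {ι : Type} (s : Finset ι) (f : ι → K) {a : WithTop ℤ}
    (h : ∀ i ∈ s, a ≤ ord (f i)) : a ≤ ord (∑ i ∈ s, f i) := by
  classical
  induction s using Finset.induction with
  | empty => simp [aux_ord_zero]
  | insert _ _ hx ih =>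
    rename_i b s'
    rw [Finset.sum_insert hx]
    refine le_trans (le_min (h _ (Finset.mem_insert_self _ _)) ?_) (ord_add _ _)
    exact ih fun i hi => h i (Finset.mem_insert_of_mem hi)

lemma isLocallyConstant_char {ι : Type} [Fintype ι] (ψ : AddChar K ℂ)
    (hψ : IsStandardChar ψ) (ξ : ι → K) :
    IsLocallyConstant fun x : ι → K => ψ (∑ i, x i * ξ i) := by
  rw [IsLocallyConstant.iff_exists_open]
  intro x
  obtain ⟨d, hd⟩ := exists_int_le_ord ξ
  refine ⟨pball x (1 - d), isOpen_pball _ _, mem_pball_self _ _, ?_⟩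
  intro y hy
  have hsplit : (∑ i, y i * ξ i) = (∑ i, x i * ξ i) + ∑ i, (y i - x i) * ξ i := by
    rw [← Finset.sum_add_distrib]
    exact Finset.sum_congr rfl fun i _ => by ring
  rw [hsplit, AddChar.map_add_eq_mul]
  have htriv : ψ (∑ i, (y i - x i) * ξ i) = 1 := by
    refine hψ.1 _ (aux_le_ord_sum _ _ fun i _ => ?_)
    rw [ord_mul]
    have h1 : ((1 - d : ℤ) : WithTop ℤ) ≤ ord (y i - x i) := by
      have := mem_pball_iff.1 hy i
      rwa [← aux_ord_neg, neg_sub] at this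
    calc (1 : WithTop ℤ) = ((1 - d : ℤ) : WithTop ℤ) + (d : WithTop ℤ) := by
          rw [← WithTop.coe_add]
          norm_num
      _ ≤ ord (y i - x i) + ord (ξ i) := add_le_add h1 (hd i)
  rw [htriv, mul_one]

lemma isLocallyConstant_indicator {α : Type} [TopologicalSpace α] {s : Set α}
    (hs : IsOpen s) (hs' : IsClosed s) :
    IsLocallyConstant (s.indicator (fun _ => (1 : ℂ))) := by
  rw [IsLocallyConstant.iff_exists_open]
  intro x
  by_cases hx : x ∈ s
  · exact ⟨s, hs, hx, fun y hy => by simp [Set.indicator_of_mem, hx, hy]⟩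
  · exact ⟨sᶜ, hs'.isOpen_compl, hx, fun y hy => by
      simp [Set.indicator_of_notMem, hx, Set.notMem_of_mem_compl hy]⟩

lemma tsupport_indicator_subset {α : Type} [TopologicalSpace α] {s : Set α}
    (hs' : IsClosed s) : tsupport (s.indicator (fun _ => (1 : ℂ))) ⊆ s := by
  apply closure_minimal _ hs'
  intro x hx
  by_contra hxs
  exact hx (Set.indicator_of_notMem hxs _)

lemma isSBOn_indicator_pball {ι : Type} [Fintype ι] {X : Set (ι → K)} (c : ι → K) (m : ℤ)
    (h : pball c m ⊆ X) : IsSBOn X ((pball c m).indicator (fun _ => (1 : ℂ))) := by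
  refine ⟨isLocallyConstant_indicator (isOpen_pball c m) (isClosed_pball c m), ?_, ?_⟩
  · exact HasCompactSupport.intro' (isCompact_pball c m) (isClosed_pball c m)
      (fun x hx => Set.indicator_of_notMem hx _)
  · exact subset_trans (tsupport_indicator_subset (isClosed_pball c m)) h

lemma isSBOn_zero {α : Type} [TopologicalSpace α] {U : Set α} : IsSBOn U (0 : α → ℂ) := by
  refine ⟨IsLocallyConstant.const 0, ?_, ?_⟩
  · rw [HasCompactSupport]
    have : tsupport (0 : α → ℂ) = ∅ := by
      simp [tsupport, Function.support_zero]
    rw [this]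
    exact isCompact_empty
  · have : tsupport (0 : α → ℂ) = ∅ := by
      simp [tsupport, Function.support_zero]
    rw [this]
    exact Set.empty_subset _

lemma w_zero {α : Type} [TopologicalSpace α] {U : Set α} {w : (α → ℂ) → ℂ}
    (hw : IsDistributionOn U w) : w 0 = 0 := by
  have := hw.1 0 0 isSBOn_zero
  rwa [zero_smul, zero_mul] at this

lemma IsSBOn.aux_add {α : Type} [TopologicalSpace α] {U : Set α} {f g : α → ℂ}
    (hf : IsSBOn U f) (hg : IsSBOn U g) : IsSBOn U (f + g) :=
  ⟨hf.1.add hg.1, hf.2.1.add hg.2.1,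
    subset_trans (tsupport_add f g) (Set.union_subset hf.2.2 hg.2.2)⟩

lemma IsSBOn.aux_mul_char {α : Type} [TopologicalSpace α] {U : Set α} {f : α → ℂ}
    {c : α → ℂ} (hf : IsSBOn U f) (hc : IsLocallyConstant c) :
    IsSBOn U (fun x => f x * c x) :=
  ⟨hf.1.mul hc, hf.2.1.mul_right,
    subset_trans (tsupport_mul_subset_left) hf.2.2⟩

lemma IsSBOn.aux_smul {α : Type} [TopologicalSpace α] {U : Set α} {f : α → ℂ} (a : ℂ)
    (hf : IsSBOn U f) : IsSBOn U (a • f) := by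
  refine ⟨?_, ?_, ?_⟩
  · have : (a • f) = fun x => a * f x := rfl
    rw [this]
    exact (IsLocallyConstant.const a).mul hf.1
  · exact hf.2.1.smul_left
  · refine subset_trans ?_ hf.2.2
    apply closure_mono
    intro x hx
    simp only [Function.mem_support, Pi.smul_apply, smul_eq_mul] at hx
    exact fun h0 => hx (by rw [h0, mul_zero])

end AuxHelpers

section ProdHelpers

open NALocalField

variable {K : Type} [Field K] [TopologicalSpace K] [IsTopologicalRing K] [NALocalField K]
variable {n₁ n₂ : ℕ}

/-- Product ball in `K^{n₁} × K^{n₂}`. -/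
def Ball2 (c : (Fin n₁ → K) × (Fin n₂ → K)) (m : ℤ) : Set ((Fin n₁ → K) × (Fin n₂ → K)) :=
  pball c.1 m ×ˢ pball c.2 m

lemma mem_Ball2_self (c : (Fin n₁ → K) × (Fin n₂ → K)) (m : ℤ) : c ∈ Ball2 c m :=
  ⟨mem_pball_self _ _, mem_pball_self _ _⟩

lemma isOpen_Ball2 (c : (Fin n₁ → K) × (Fin n₂ → K)) (m : ℤ) : IsOpen (Ball2 c m) :=
  (isOpen_pball _ _).prod (isOpen_pball _ _)

lemma isClosed_Ball2 (c : (Fin n₁ → K) × (Fin n₂ → K)) (m : ℤ) : IsClosed (Ball2 c m) :=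
  (isClosed_pball _ _).prod (isClosed_pball _ _)

lemma isCompact_Ball2 (c : (Fin n₁ → K) × (Fin n₂ → K)) (m : ℤ) : IsCompact (Ball2 c m) :=
  (isCompact_pball _ _).prod (isCompact_pball _ _)

lemma Ball2_symm {c x : (Fin n₁ → K) × (Fin n₂ → K)} {m : ℤ} (h : x ∈ Ball2 c m) :
    c ∈ Ball2 x m := ⟨pball_symm h.1, pball_symm h.2⟩

lemma Ball2_trans {c x y : (Fin n₁ → K) × (Fin n₂ → K)} {m : ℤ}
    (h1 : x ∈ Ball2 c m) (h2 : y ∈ Ball2 x m) : y ∈ Ball2 c m :=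
  ⟨pball_trans h1.1 h2.1, pball_trans h1.2 h2.2⟩

lemma Ball2_mono (x : (Fin n₁ → K) × (Fin n₂ → K)) {r m : ℤ} (h : r ≤ m) :
    Ball2 x m ⊆ Ball2 x r := fun y hy => ⟨pball_mono _ h hy.1, pball_mono _ h hy.2⟩

lemma exists_Ball2_subset {x : (Fin n₁ → K) × (Fin n₂ → K)}
    {W : Set ((Fin n₁ → K) × (Fin n₂ → K))} (hW : IsOpen W) (hx : x ∈ W) :
    ∃ r : ℤ, Ball2 x r ⊆ W := by
  obtain ⟨u, v, hu, hv, hxu, hxv, huv⟩ := isOpen_prod_iff.1 hW x.1 x.2 (by simpa using hx)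
  obtain ⟨r₁, hr₁⟩ := exists_pball_subset hu hxu
  obtain ⟨r₂, hr₂⟩ := exists_pball_subset hv hxv
  refine ⟨max r₁ r₂, fun y hy => huv ?_⟩
  exact ⟨hr₁ (pball_mono _ (le_max_left _ _) hy.1), hr₂ (pball_mono _ (le_max_right _ _) hy.2)⟩

/-- Uniform local constancy on balls: a locally constant compactly supported function
is constant on all balls of some sufficiently small radius. -/
lemma exists_uniform_radius (φ : ((Fin n₁ → K) × (Fin n₂ → K)) → ℂ)
    (hlc : IsLocallyConstant φ) (hcs : HasCompactSupport φ) (r₀ : ℤ) :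
    ∃ m : ℤ, r₀ ≤ m ∧ ∀ x y, y ∈ Ball2 x m → φ y = φ x := by
  have h1 : ∀ x : (Fin n₁ → K) × (Fin n₂ → K), ∃ r : ℤ, ∀ y ∈ Ball2 x r, φ y = φ x := by
    intro x
    obtain ⟨Ux, hUo, hUx, hUc⟩ := (IsLocallyConstant.iff_exists_open φ).1 hlc x
    obtain ⟨r, hr⟩ := exists_Ball2_subset hUo hUx
    exact ⟨r, fun y hy => hUc y (hr hy)⟩
  choose rad hrad using h1
  obtain ⟨t, ht1, ht2⟩ := hcs.elim_nhds_subcover (fun x => Ball2 x (rad x))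
    (fun x _ => (isOpen_Ball2 x (rad x)).mem_nhds (mem_Ball2_self x (rad x)))
  obtain ⟨M, hM⟩ := Finset.exists_le (insert r₀ (t.image rad))
  have hr₀M : r₀ ≤ M := hM _ (Finset.mem_insert_self _ _)
  have key : ∀ x y, x ∈ tsupport φ → y ∈ Ball2 x M → φ y = φ x := by
    intro x y hx hy
    have hxcov := ht2 hx
    simp only [Set.mem_iUnion, exists_prop] at hxcov
    obtain ⟨c, hct, hc⟩ := hxcov
    have hMc : rad c ≤ M := hM _ (Finset.mem_insert_of_mem (Finset.mem_image_of_mem _ hct))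
    have hy' : y ∈ Ball2 c (rad c) := Ball2_trans hc (Ball2_mono x hMc hy)
    rw [hrad c y hy', hrad c x hc]
  refine ⟨M, hr₀M, fun x y hy => ?_⟩
  by_cases hx : x ∈ tsupport φ
  · exact key x y hx hy
  · by_cases hy' : y ∈ tsupport φ
    · exact (key y x hy' (Ball2_symm hy)).symm
    · rw [image_eq_zero_of_notMem_tsupport hx, image_eq_zero_of_notMem_tsupport hy']

end ProdHelpers

section MainHelpers

open NALocalField

variable {K : Type} [Field K] [TopologicalSpace K] [IsTopologicalRing K] [NALocalField K]
variable {n₁ n₂ : ℕ}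

/-- The tensor indicator function of a product ball. -/
def tensInd (c : (Fin n₁ → K) × (Fin n₂ → K)) (m : ℤ) :
    ((Fin n₁ → K) × (Fin n₂ → K)) → ℂ :=
  fun x => (pball c.1 m).indicator (fun _ => (1 : ℂ)) x.1 *
    (pball c.2 m).indicator (fun _ => (1 : ℂ)) x.2

lemma tensInd_eq_one {c x : (Fin n₁ → K) × (Fin n₂ → K)} {m : ℤ} (h : x ∈ Ball2 c m) :
    tensInd c m x = 1 := by
  unfold tensInd
  rw [Set.indicator_of_mem h.1, Set.indicator_of_mem h.2, one_mul]

lemma tensInd_eq_zero {c x : (Fin n₁ → K) × (Fin n₂ → K)} {m : ℤ} (h : x ∉ Ball2 c m) :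
    tensInd c m x = 0 := by
  unfold tensInd
  by_cases h1 : x.1 ∈ pball c.1 m
  · have h2 : x.2 ∉ pball c.2 m := fun h2 => h ⟨h1, h2⟩
    rw [Set.indicator_of_notMem h2, mul_zero]
  · rw [Set.indicator_of_notMem h1, zero_mul]

lemma isLocallyConstant_tensInd (c : (Fin n₁ → K) × (Fin n₂ → K)) (m : ℤ) :
    IsLocallyConstant (tensInd c m) := by
  have h1 : IsLocallyConstant fun x : (Fin n₁ → K) × (Fin n₂ → K) =>
      (pball c.1 m).indicator (fun _ => (1 : ℂ)) x.1 :=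
    (isLocallyConstant_indicator (isOpen_pball _ _) (isClosed_pball _ _)).comp_continuous
      continuous_fst
  have h2 : IsLocallyConstant fun x : (Fin n₁ → K) × (Fin n₂ → K) =>
      (pball c.2 m).indicator (fun _ => (1 : ℂ)) x.2 :=
    (isLocallyConstant_indicator (isOpen_pball _ _) (isClosed_pball _ _)).comp_continuous
      continuous_snd
  exact h1.mul h2

lemma isSBOn_tensInd {X₁ : Set (Fin n₁ → K)} {X₂ : Set (Fin n₂ → K)}
    (c : (Fin n₁ → K) × (Fin n₂ → K)) (m : ℤ) (h : Ball2 c m ⊆ X₁ ×ˢ X₂) :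
    IsSBOn (X₁ ×ˢ X₂) (tensInd c m) := by
  have hts : tsupport (tensInd c m) ⊆ Ball2 c m := by
    apply closure_minimal _ (isClosed_Ball2 c m)
    intro x hx
    by_contra hxc
    exact hx (tensInd_eq_zero hxc)
  refine ⟨isLocallyConstant_tensInd c m, ?_, subset_trans hts h⟩
  exact HasCompactSupport.intro' (isCompact_Ball2 c m) (isClosed_Ball2 c m)
    (fun x hx => tensInd_eq_zero hx)

variable (ψ : AddChar K ℂ)

/-- The full character on the product space is locally constant. -/
lemma isLocallyConstant_char2 (hψ : IsStandardChar ψ) (ξ : (Fin n₁ → K) × (Fin n₂ → K)) :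
    IsLocallyConstant fun x : (Fin n₁ → K) × (Fin n₂ → K) =>
      ψ ((∑ i, x.1 i * ξ.1 i) + ∑ j, x.2 j * ξ.2 j) := by
  have heq : (fun x : (Fin n₁ → K) × (Fin n₂ → K) =>
      ψ ((∑ i, x.1 i * ξ.1 i) + ∑ j, x.2 j * ξ.2 j)) =
      fun x => ψ (∑ i, x.1 i * ξ.1 i) * ψ (∑ j, x.2 j * ξ.2 j) :=
    funext fun x => AddChar.map_add_eq_mul ψ _ _
  rw [heq]
  exact ((isLocallyConstant_char ψ hψ ξ.1).comp_continuous continuous_fst).mul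
    ((isLocallyConstant_char ψ hψ ξ.2).comp_continuous continuous_snd)

lemma FTrans2_add {X₁ : Set (Fin n₁ → K)} {X₂ : Set (Fin n₂ → K)}
    {w : (((Fin n₁ → K) × (Fin n₂ → K)) → ℂ) → ℂ} (hw : IsDistributionOn (X₁ ×ˢ X₂) w)
    (hψ : IsStandardChar ψ) {φ φ' : ((Fin n₁ → K) × (Fin n₂ → K)) → ℂ}
    (hφ : IsSBOn (X₁ ×ˢ X₂) φ) (hφ' : IsSBOn (X₁ ×ˢ X₂) φ')
    (ξ : (Fin n₁ → K) × (Fin n₂ → K)) :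
    FTrans2 ψ w (φ + φ') ξ = FTrans2 ψ w φ ξ + FTrans2 ψ w φ' ξ := by
  unfold FTrans2
  have heq : (fun x => (φ + φ') x * ψ ((∑ i, x.1 i * ξ.1 i) + ∑ j, x.2 j * ξ.2 j)) =
      (fun x => φ x * ψ ((∑ i, x.1 i * ξ.1 i) + ∑ j, x.2 j * ξ.2 j)) +
      (fun x => φ' x * ψ ((∑ i, x.1 i * ξ.1 i) + ∑ j, x.2 j * ξ.2 j)) := by
    funext x
    simp [Pi.add_apply]
    ring
  rw [heq]
  exact hw.2 _ _ (hφ.aux_mul_char (isLocallyConstant_char2 ψ hψ ξ))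
    (hφ'.aux_mul_char (isLocallyConstant_char2 ψ hψ ξ))

lemma FTrans2_smul {X₁ : Set (Fin n₁ → K)} {X₂ : Set (Fin n₂ → K)}
    {w : (((Fin n₁ → K) × (Fin n₂ → K)) → ℂ) → ℂ} (hw : IsDistributionOn (X₁ ×ˢ X₂) w)
    (hψ : IsStandardChar ψ) {φ : ((Fin n₁ → K) × (Fin n₂ → K)) → ℂ} (a : ℂ)
    (hφ : IsSBOn (X₁ ×ˢ X₂) φ) (ξ : (Fin n₁ → K) × (Fin n₂ → K)) :
    FTrans2 ψ w (a • φ) ξ = a * FTrans2 ψ w φ ξ := by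
  unfold FTrans2
  have heq : (fun x => (a • φ) x * ψ ((∑ i, x.1 i * ξ.1 i) + ∑ j, x.2 j * ξ.2 j)) =
      a • (fun x => φ x * ψ ((∑ i, x.1 i * ξ.1 i) + ∑ j, x.2 j * ξ.2 j)) := by
    funext x
    simp [Pi.smul_apply, smul_eq_mul]
    ring
  rw [heq]
  exact hw.1 a _ (hφ.aux_mul_char (isLocallyConstant_char2 ψ hψ ξ))

lemma FTrans2_zero {w : (((Fin n₁ → K) × (Fin n₂ → K)) → ℂ) → ℂ}
    {X₁ : Set (Fin n₁ → K)} {X₂ : Set (Fin n₂ → K)} (hw : IsDistributionOn (X₁ ×ˢ X₂) w)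
    (ξ : (Fin n₁ → K) × (Fin n₂ → K)) : FTrans2 ψ w (0 : _) ξ = 0 := by
  unfold FTrans2
  convert w_zero hw using 2
  funext x
  simp

/-- The Fourier transform of a pure tensor factors. -/
lemma FTrans2_tensor {X₁ : Set (Fin n₁ → K)} {X₂ : Set (Fin n₂ → K)}
    {u₁ : ((Fin n₁ → K) → ℂ) → ℂ} {u₂ : ((Fin n₂ → K) → ℂ) → ℂ}
    {w : (((Fin n₁ → K) × (Fin n₂ → K)) → ℂ) → ℂ}
    (htensor : ∀ (φ₁ : (Fin n₁ → K) → ℂ) (φ₂ : (Fin n₂ → K) → ℂ),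
      IsSBOn X₁ φ₁ → IsSBOn X₂ φ₂ → w (fun p => φ₁ p.1 * φ₂ p.2) = u₁ φ₁ * u₂ φ₂)
    (hψ : IsStandardChar ψ)
    {φ₁ : (Fin n₁ → K) → ℂ} {φ₂ : (Fin n₂ → K) → ℂ}
    (h₁ : IsSBOn X₁ φ₁) (h₂ : IsSBOn X₂ φ₂) (ξ : (Fin n₁ → K) × (Fin n₂ → K)) :
    FTrans2 ψ w (fun x => φ₁ x.1 * φ₂ x.2) ξ =
      FTrans ψ u₁ φ₁ ξ.1 * FTrans ψ u₂ φ₂ ξ.2 := by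
  unfold FTrans2 FTrans
  have heq : (fun x : (Fin n₁ → K) × (Fin n₂ → K) =>
      (φ₁ x.1 * φ₂ x.2) * ψ ((∑ i, x.1 i * ξ.1 i) + ∑ j, x.2 j * ξ.2 j)) =
      fun x => (fun y => φ₁ y * ψ (∑ i, y i * ξ.1 i)) x.1 *
        (fun y => φ₂ y * ψ (∑ j, y j * ξ.2 j)) x.2 := by
    funext x
    simp only [AddChar.map_add_eq_mul]
    ring
  rw [heq]
  exact htensor _ _ (h₁.aux_mul_char (isLocallyConstant_char ψ hψ ξ.1))
    (h₂.aux_mul_char (isLocallyConstant_char ψ hψ ξ.2))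

/-- Key induction: if the Fourier transform of each tensor ball-indicator decays on `V₀`,
then so does that of any function subordinated to the finite ball cover. -/
lemma key_induction (hψ : IsStandardChar ψ) (Λ : Set K)
    (X₁ : Set (Fin n₁ → K)) (X₂ : Set (Fin n₂ → K))
    (w : (((Fin n₁ → K) × (Fin n₂ → K)) → ℂ) → ℂ)
    (hw : IsDistributionOn (X₁ ×ˢ X₂) w)
    (m : ℤ) (V₀ : Set ((Fin n₁ → K) × (Fin n₂ → K)))
    (t : Finset ((Fin n₁ → K) × (Fin n₂ → K))) :
    ∀ φ : ((Fin n₁ → K) × (Fin n₂ → K)) → ℂ,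
      IsLocallyConstant φ → HasCompactSupport φ →
      (∀ x y, y ∈ Ball2 x m → φ y = φ x) →
      tsupport φ ⊆ (⋃ c ∈ t, Ball2 c m) →
      (∀ c ∈ t, Ball2 c m ⊆ X₁ ×ˢ X₂) →
      (∀ c ∈ t, ∃ N : ℤ, ∀ lam ∈ Λ, NALocalField.ord lam < (N : WithTop ℤ) →
        ∀ ξ ∈ V₀, FTrans2 ψ w (tensInd c m)
          ((fun i => lam * ξ.1 i), fun j => lam * ξ.2 j) = 0) →
      ∃ N : ℤ, ∀ lam ∈ Λ, NALocalField.ord lam < (N : WithTop ℤ) →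
        ∀ ξ ∈ V₀, FTrans2 ψ w φ ((fun i => lam * ξ.1 i), fun j => lam * ξ.2 j) = 0 := by
  classical
  induction t using Finset.induction with
  | empty =>
    intro φ _ _ _ hsupp _ _
    have hφ0 : φ = 0 := by
      funext x
      by_contra hx
      have : x ∈ tsupport φ := subset_closure (by simpa [Function.mem_support] using hx)
      simpa using hsupp this
    subst hφ0
    exact ⟨0, fun lam _ _ ξ _ => FTrans2_zero ψ hw _⟩
  | insert _ _ hcs ih =>
    rename_i c s
    intro φ hlc hcsupp hconst hsupp hball hvan
    -- the pure tensor part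
    have hBX : Ball2 c m ⊆ X₁ ×ˢ X₂ := hball c (Finset.mem_insert_self c s)
    have hT : IsSBOn (X₁ ×ˢ X₂) (tensInd c m) := isSBOn_tensInd c m hBX
    set φA : ((Fin n₁ → K) × (Fin n₂ → K)) → ℂ := φ c • tensInd c m with hφA
    have hφAsb : IsSBOn (X₁ ×ˢ X₂) φA := hT.aux_smul (φ c)
    set φB : ((Fin n₁ → K) × (Fin n₂ → K)) → ℂ := fun x => φ x - φA x with hφB
    -- properties of φB
    have hφBval : ∀ x, φB x = φ x - φ c * tensInd c m x := fun x => rfl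
    have hφBzero : ∀ x ∈ Ball2 c m, φB x = 0 := by
      intro x hx
      rw [hφBval, tensInd_eq_one hx, mul_one, hconst c x hx, sub_self]
    have hφBeq : ∀ x, x ∉ Ball2 c m → φB x = φ x := by
      intro x hx
      rw [hφBval, tensInd_eq_zero hx, mul_zero, sub_zero]
    have hφBlc : IsLocallyConstant φB := by
      apply IsLocallyConstant.sub hlc
      have : (fun x => φA x) = fun x => φ c * tensInd c m x := rfl
      exact (IsLocallyConstant.const (φ c)).mul (isLocallyConstant_tensInd c m)
    have hφBsupp : tsupport φB ⊆ ⋃ c' ∈ s, Ball2 c' m := by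
      have hclosed : IsClosed (⋃ c' ∈ s, Ball2 c' m) := by
        apply Set.Finite.isClosed_biUnion (Finset.finite_toSet s)
        exact fun c' _ => isClosed_Ball2 c' m
      apply closure_minimal _ hclosed
      intro x hx
      rw [Function.mem_support] at hx
      have hxB : x ∉ Ball2 c m := fun hxB => hx (hφBzero x hxB)
      have hxφ : φ x ≠ 0 := by rwa [hφBeq x hxB] at hx
      have hxt : x ∈ tsupport φ := subset_closure (Function.mem_support.2 hxφ)
      have := hsupp hxt
      simp only [Set.mem_iUnion, exists_prop] at this ⊢
      obtain ⟨c', hc't, hc'⟩ := this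
      rcases Finset.mem_insert.1 hc't with h | h
      · exact absurd (h ▸ hc') hxB
      · exact ⟨c', h, hc'⟩
    have hφBcs : HasCompactSupport φB := by
      apply HasCompactSupport.intro' ((Finset.finite_toSet s).isCompact_biUnion
        (fun c' _ => isCompact_Ball2 c' m)) ?_ ?_
      · apply Set.Finite.isClosed_biUnion (Finset.finite_toSet s)
        exact fun c' _ => isClosed_Ball2 c' m
      · intro x hx
        by_contra h0
        exact hx (hφBsupp (subset_closure (Function.mem_support.2 h0)))
    have hφBconst : ∀ x y, y ∈ Ball2 x m → φB y = φB x := by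
      intro x y hy
      rw [hφBval, hφBval, hconst x y hy]
      congr 2
      by_cases hx1 : x ∈ Ball2 c m
      · rw [tensInd_eq_one hx1, tensInd_eq_one (Ball2_trans hx1 hy)]
      · have hy1 : y ∉ Ball2 c m := by
          intro hy1
          exact hx1 (Ball2_trans hy1 (Ball2_symm hy))
        rw [tensInd_eq_zero hx1, tensInd_eq_zero hy1]
    -- apply induction hypothesis to φB
    obtain ⟨NB, hNB⟩ := ih φB hφBlc hφBcs hφBconst hφBsupp
      (fun c' hc' => hball c' (Finset.mem_insert_of_mem hc'))
      (fun c' hc' => hvan c' (Finset.mem_insert_of_mem hc'))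
    obtain ⟨NA, hNA⟩ := hvan c (Finset.mem_insert_self c s)
    refine ⟨min NA NB, fun lam hlam hord ξ hξ => ?_⟩
    have hordA : NALocalField.ord lam < (NA : WithTop ℤ) :=
      lt_of_lt_of_le hord (by exact_mod_cast min_le_left NA NB)
    have hordB : NALocalField.ord lam < (NB : WithTop ℤ) :=
      lt_of_lt_of_le hord (by exact_mod_cast min_le_right NA NB)
    have hφsb : IsSBOn (X₁ ×ˢ X₂) φ := by
      refine ⟨hlc, hcsupp, subset_trans hsupp ?_⟩
      intro x hx
      simp only [Set.mem_iUnion, exists_prop] at hx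
      obtain ⟨c', hc't, hc'⟩ := hx
      exact hball c' hc't hc'
    have hφBsb : IsSBOn (X₁ ×ˢ X₂) φB := by
      refine ⟨hφBlc, hφBcs, subset_trans hφBsupp ?_⟩
      intro x hx
      simp only [Set.mem_iUnion, exists_prop] at hx
      obtain ⟨c', hc't, hc'⟩ := hx
      exact hball c' (Finset.mem_insert_of_mem hc't) hc'
    have hsplit : φ = φA + φB := by
      funext x
      simp [hφB]
    rw [hsplit, FTrans2_add ψ hw hψ hφAsb hφBsb,
      FTrans2_smul ψ hw hψ (φ c) hT, hNA lam hlam hordA ξ hξ,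
      hNB lam hlam hordB ξ hξ, mul_zero, zero_add]

end MainHelpers

section SideLemmas

variable {K : Type} [Field K] [TopologicalSpace K] [IsTopologicalRing K] [NALocalField K]
variable {n₁ n₂ : ℕ}

/-- If `u₁` is `Λ`-smooth at `(x₁, ξ₁)`, then the tensor product is `Λ`-smooth at
`((x₁,x₂),(ξ₁,ξ₂))`. -/
lemma smooth_side1 (ψ : AddChar K ℂ) (hψ : IsStandardChar ψ) (Λ : Set K)
    (X₁ : Set (Fin n₁ → K)) (X₂ : Set (Fin n₂ → K)) (h₁ : IsOpen X₁) (h₂ : IsOpen X₂)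
    (u₁ : ((Fin n₁ → K) → ℂ) → ℂ) (u₂ : ((Fin n₂ → K) → ℂ) → ℂ)
    (w : (((Fin n₁ → K) × (Fin n₂ → K)) → ℂ) → ℂ)
    (hw : IsDistributionOn (X₁ ×ˢ X₂) w)
    (htensor : ∀ (φ₁ : (Fin n₁ → K) → ℂ) (φ₂ : (Fin n₂ → K) → ℂ),
      IsSBOn X₁ φ₁ → IsSBOn X₂ φ₂ → w (fun p => φ₁ p.1 * φ₂ p.2) = u₁ φ₁ * u₂ φ₂)
    {x₁ ξ₁ : Fin n₁ → K} {x₂ ξ₂ : Fin n₂ → K} (hx₁ : x₁ ∈ X₁) (hx₂ : x₂ ∈ X₂)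
    (hsm : LamSmoothAt ψ Λ X₁ u₁ x₁ ξ₁) :
    LamSmoothAt2 ψ Λ (X₁ ×ˢ X₂) w (x₁, x₂) (ξ₁, ξ₂) := by
  obtain ⟨U₁₀, V₁₀, hU₁o, hV₁o, hxU, hξV, hprop⟩ := hsm
  obtain ⟨r₁, hr₁⟩ := exists_pball_subset (hU₁o.inter h₁) ⟨hxU, hx₁⟩
  obtain ⟨r₂, hr₂⟩ := exists_pball_subset h₂ hx₂
  set r : ℤ := max r₁ r₂ with hr
  refine ⟨pball x₁ r ×ˢ pball x₂ r, V₁₀ ×ˢ (Set.univ : Set (Fin n₂ → K)),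
    (isOpen_pball _ _).prod (isOpen_pball _ _), hV₁o.prod isOpen_univ,
    ⟨mem_pball_self _ _, mem_pball_self _ _⟩, ⟨hξV, trivial⟩, ?_⟩
  intro φ hφ hφU₀
  obtain ⟨m, hrm, hconst⟩ := exists_uniform_radius φ hφ.1 hφ.2.1 r
  obtain ⟨t, ht1, ht2⟩ := hφ.2.1.elim_nhds_subcover (fun c => Ball2 c m)
    (fun c _ => (isOpen_Ball2 c m).mem_nhds (mem_Ball2_self c m))
  have hsub : ∀ c ∈ t, (pball c.1 m ⊆ U₁₀ ∩ X₁) ∧ pball c.2 m ⊆ X₂ := by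
    intro c hct
    have hc := hφU₀ (ht1 c hct)
    have hsub1 : pball c.1 m ⊆ pball x₁ r :=
      fun y hy => pball_trans hc.1 (pball_mono _ hrm hy)
    have hsub2 : pball c.2 m ⊆ pball x₂ r :=
      fun y hy => pball_trans hc.2 (pball_mono _ hrm hy)
    constructor
    · exact fun y hy => hr₁ (pball_mono _ (le_max_left r₁ r₂) (hsub1 hy))
    · exact fun y hy => hr₂ (pball_mono _ (le_max_right r₁ r₂) (hsub2 hy))
  refine key_induction ψ hψ Λ X₁ X₂ w hw m _ t φ hφ.1 hφ.2.1 hconst ht2 ?_ ?_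
  · intro c hct
    exact fun y hy => ⟨((hsub c hct).1 hy.1).2, (hsub c hct).2 hy.2⟩
  · intro c hct
    have hSB1 : IsSBOn X₁ ((pball c.1 m).indicator (fun _ => (1 : ℂ))) :=
      isSBOn_indicator_pball c.1 m (fun y hy => ((hsub c hct).1 hy).2)
    have hSB2 : IsSBOn X₂ ((pball c.2 m).indicator (fun _ => (1 : ℂ))) :=
      isSBOn_indicator_pball c.2 m ((hsub c hct).2)
    have hts1 : tsupport ((pball c.1 m).indicator (fun _ => (1 : ℂ))) ⊆ U₁₀ :=
      subset_trans (tsupport_indicator_subset (isClosed_pball _ _))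
        (fun y hy => ((hsub c hct).1 hy).1)
    obtain ⟨N, hN⟩ := hprop _ hSB1 hts1
    refine ⟨N, fun lam hlam hord ξ hξ => ?_⟩
    have hfac := FTrans2_tensor ψ htensor hψ hSB1 hSB2
      ((fun i => lam * ξ.1 i), fun j => lam * ξ.2 j)
    have : FTrans2 ψ w (tensInd c m) ((fun i => lam * ξ.1 i), fun j => lam * ξ.2 j) =
        FTrans ψ u₁ ((pball c.1 m).indicator (fun _ => (1 : ℂ))) (fun i => lam * ξ.1 i) *
        FTrans ψ u₂ ((pball c.2 m).indicator (fun _ => (1 : ℂ))) (fun j => lam * ξ.2 j) :=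
      hfac
    rw [this, hN lam hlam hord ξ.1 hξ.1, zero_mul]

/-- If `u₂` is `Λ`-smooth at `(x₂, ξ₂)`, then the tensor product is `Λ`-smooth at
`((x₁,x₂),(ξ₁,ξ₂))`. -/
lemma smooth_side2 (ψ : AddChar K ℂ) (hψ : IsStandardChar ψ) (Λ : Set K)
    (X₁ : Set (Fin n₁ → K)) (X₂ : Set (Fin n₂ → K)) (h₁ : IsOpen X₁) (h₂ : IsOpen X₂)
    (u₁ : ((Fin n₁ → K) → ℂ) → ℂ) (u₂ : ((Fin n₂ → K) → ℂ) → ℂ)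
    (w : (((Fin n₁ → K) × (Fin n₂ → K)) → ℂ) → ℂ)
    (hw : IsDistributionOn (X₁ ×ˢ X₂) w)
    (htensor : ∀ (φ₁ : (Fin n₁ → K) → ℂ) (φ₂ : (Fin n₂ → K) → ℂ),
      IsSBOn X₁ φ₁ → IsSBOn X₂ φ₂ → w (fun p => φ₁ p.1 * φ₂ p.2) = u₁ φ₁ * u₂ φ₂)
    {x₁ ξ₁ : Fin n₁ → K} {x₂ ξ₂ : Fin n₂ → K} (hx₁ : x₁ ∈ X₁) (hx₂ : x₂ ∈ X₂)
    (hsm : LamSmoothAt ψ Λ X₂ u₂ x₂ ξ₂) :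
    LamSmoothAt2 ψ Λ (X₁ ×ˢ X₂) w (x₁, x₂) (ξ₁, ξ₂) := by
  obtain ⟨U₂₀, V₂₀, hU₂o, hV₂o, hxU, hξV, hprop⟩ := hsm
  obtain ⟨r₁, hr₁⟩ := exists_pball_subset h₁ hx₁
  obtain ⟨r₂, hr₂⟩ := exists_pball_subset (hU₂o.inter h₂) ⟨hxU, hx₂⟩
  set r : ℤ := max r₁ r₂ with hr
  refine ⟨pball x₁ r ×ˢ pball x₂ r, (Set.univ : Set (Fin n₁ → K)) ×ˢ V₂₀,
    (isOpen_pball _ _).prod (isOpen_pball _ _), isOpen_univ.prod hV₂o,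
    ⟨mem_pball_self _ _, mem_pball_self _ _⟩, ⟨trivial, hξV⟩, ?_⟩
  intro φ hφ hφU₀
  obtain ⟨m, hrm, hconst⟩ := exists_uniform_radius φ hφ.1 hφ.2.1 r
  obtain ⟨t, ht1, ht2⟩ := hφ.2.1.elim_nhds_subcover (fun c => Ball2 c m)
    (fun c _ => (isOpen_Ball2 c m).mem_nhds (mem_Ball2_self c m))
  have hsub : ∀ c ∈ t, (pball c.1 m ⊆ X₁) ∧ pball c.2 m ⊆ U₂₀ ∩ X₂ := by
    intro c hct
    have hc := hφU₀ (ht1 c hct)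
    have hsub1 : pball c.1 m ⊆ pball x₁ r :=
      fun y hy => pball_trans hc.1 (pball_mono _ hrm hy)
    have hsub2 : pball c.2 m ⊆ pball x₂ r :=
      fun y hy => pball_trans hc.2 (pball_mono _ hrm hy)
    constructor
    · exact fun y hy => hr₁ (pball_mono _ (le_max_left r₁ r₂) (hsub1 hy))
    · exact fun y hy => hr₂ (pball_mono _ (le_max_right r₁ r₂) (hsub2 hy))
  refine key_induction ψ hψ Λ X₁ X₂ w hw m _ t φ hφ.1 hφ.2.1 hconst ht2 ?_ ?_
  · intro c hct
    exact fun y hy => ⟨(hsub c hct).1 hy.1, ((hsub c hct).2 hy.2).2⟩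
  · intro c hct
    have hSB1 : IsSBOn X₁ ((pball c.1 m).indicator (fun _ => (1 : ℂ))) :=
      isSBOn_indicator_pball c.1 m ((hsub c hct).1)
    have hSB2 : IsSBOn X₂ ((pball c.2 m).indicator (fun _ => (1 : ℂ))) :=
      isSBOn_indicator_pball c.2 m (fun y hy => ((hsub c hct).2 hy).2)
    have hts2 : tsupport ((pball c.2 m).indicator (fun _ => (1 : ℂ))) ⊆ U₂₀ :=
      subset_trans (tsupport_indicator_subset (isClosed_pball _ _))
        (fun y hy => ((hsub c hct).2 hy).1)
    obtain ⟨N, hN⟩ := hprop _ hSB2 hts2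
    refine ⟨N, fun lam hlam hord ξ hξ => ?_⟩
    have hfac := FTrans2_tensor ψ htensor hψ hSB1 hSB2
      ((fun i => lam * ξ.1 i), fun j => lam * ξ.2 j)
    have : FTrans2 ψ w (tensInd c m) ((fun i => lam * ξ.1 i), fun j => lam * ξ.2 j) =
        FTrans ψ u₁ ((pball c.1 m).indicator (fun _ => (1 : ℂ))) (fun i => lam * ξ.1 i) *
        FTrans ψ u₂ ((pball c.2 m).indicator (fun _ => (1 : ℂ))) (fun j => lam * ξ.2 j) :=
      hfac
    rw [this, hN lam hlam hord ξ.2 hξ.2, mul_zero]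

end SideLemmas

/-- wave front sets of tensor products. Let `X₁ ⊆ K^{n₁}`,
`X₂ ⊆ K^{n₂}` be open and `u₁ ∈ S'(X₁)`, `u₂ ∈ S'(X₂)`. Then
`WF_Λ(u₁ ⊗ u₂) ⊆ WF⁰_Λ(u₁) × WF⁰_Λ(u₂)`, where `WF⁰_Λ(v) = WF_Λ(v) ∪ (X × {0})`. -/
theorem waveFront_tensor_subset {K : Type} [Field K] [TopologicalSpace K]
    [IsTopologicalRing K] [NALocalField K]
    (ψ : AddChar K ℂ) (hψ : IsStandardChar ψ)
    (Λ : Set K) (hΛ : IsOpenFinIndexSubgroup Λ)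
    {n₁ n₂ : ℕ} (X₁ : Set (Fin n₁ → K)) (X₂ : Set (Fin n₂ → K))
    (h₁ : IsOpen X₁) (h₂ : IsOpen X₂)
    (u₁ : ((Fin n₁ → K) → ℂ) → ℂ) (u₂ : ((Fin n₂ → K) → ℂ) → ℂ)
    (hu₁ : IsDistributionOn X₁ u₁) (hu₂ : IsDistributionOn X₂ u₂)
    (w : (((Fin n₁ → K) × (Fin n₂ → K)) → ℂ) → ℂ)
    (hw : IsDistributionOn (X₁ ×ˢ X₂) w)
    (htensor : ∀ (φ₁ : (Fin n₁ → K) → ℂ) (φ₂ : (Fin n₂ → K) → ℂ),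
      IsSBOn X₁ φ₁ → IsSBOn X₂ φ₂ → w (fun p => φ₁ p.1 * φ₂ p.2) = u₁ φ₁ * u₂ φ₂) :
    ∀ (x₁ : Fin n₁ → K) (x₂ : Fin n₂ → K) (ξ₁ : Fin n₁ → K) (ξ₂ : Fin n₂ → K),
      ((x₁, x₂), (ξ₁, ξ₂)) ∈ WFset2 ψ Λ (X₁ ×ˢ X₂) w →
        (x₁, ξ₁) ∈ WFset ψ Λ X₁ u₁ ∪ X₁ ×ˢ ({0} : Set (Fin n₁ → K)) ∧
        (x₂, ξ₂) ∈ WFset ψ Λ X₂ u₂ ∪ X₂ ×ˢ ({0} : Set (Fin n₂ → K)) := by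
  intro x₁ x₂ ξ₁ ξ₂ hmem
  obtain ⟨hxU, hξ, hnot⟩ := hmem
  have hx₁ : x₁ ∈ X₁ := hxU.1
  have hx₂ : x₂ ∈ X₂ := hxU.2
  constructor
  · by_cases h : ξ₁ = 0
    · exact Or.inr ⟨hx₁, by simp [h]⟩
    · refine Or.inl ⟨hx₁, h, fun hsm => hnot ?_⟩
      exact smooth_side1 ψ hψ Λ X₁ X₂ h₁ h₂ u₁ u₂ w hw htensor hx₁ hx₂ hsm
  · by_cases h : ξ₂ = 0
    · exact Or.inr ⟨hx₂, by simp [h]⟩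
    · refine Or.inl ⟨hx₂, h, fun hsm => hnot ?_⟩
      exact smooth_side2 ψ hψ Λ X₁ X₂ h₁ h₂ u₁ u₂ w hw htensor hx₁ hx₂ hsm
end
end
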